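/- arXiv:2401.13016 — 2 statements merged into one kernel-verified Lean document; each statement's English description precedes it below -/
import Mathlib

section
/- Let g = g₀ ⊕ g₁ be a non-degenerate filiform Lie superalgebra over ℂ with dim g₀ = n+1 and dim g₁ = m, where (n,m) is one of (2,1), (2,2), (2,3), (2,4). If g is naturally graded, then g is isomorphic to the Lie superalgebra with basis {X₀, X₁, X₂} of g₀ and {Y₁, …, Y_m} of g₁ and law given by [X₀,X₁] = X₂, [X₀,Y_j] = Y_{j+1} for 1 ≤ j ≤ m−1, and (Y₁,Y₁) = X₂. -/
/-- The sign `(-1)^(i·j)` for parities `i j : ZMod 2`, as a complex scalar. -/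
def ssign (i j : ZMod 2) : ℂ := if i = 1 ∧ j = 1 then -1 else 1

/-- A (complex) Lie superalgebra structure on the vector space `V`: a ℤ₂-grading
`g` whose parts are complementary, together with an even bilinear bracket which is
super skew-symmetric and satisfies the super Jacobi identity on homogeneous elements. -/
structure LieSuperAlg (V : Type*) [AddCommGroup V] [Module ℂ V] where
  g : ZMod 2 → Submodule ℂ V
  bk : V →ₗ[ℂ] V →ₗ[ℂ] V
  compl : IsCompl (g 0) (g 1)
  grading : ∀ i j : ZMod 2, ∀ x ∈ g i, ∀ y ∈ g j, bk x y ∈ g (i + j)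
  skew : ∀ i j : ZMod 2, ∀ x ∈ g i, ∀ y ∈ g j, bk x y = -(ssign i j • bk y x)
  jacobi : ∀ i j k : ZMod 2, ∀ x ∈ g i, ∀ y ∈ g j, ∀ z ∈ g k,
    ssign k i • bk x (bk y z) + ssign i j • bk y (bk z x) + ssign j k • bk z (bk x y) = 0

namespace LieSuperAlg

variable {V : Type*} [AddCommGroup V] [Module ℂ V]

/-- The descending sequences `C⁰(g_i) = g_i`, `C^{k+1}(g_i) = [g₀, C^k(g_i)]`. -/
def C (A : LieSuperAlg V) (i : ZMod 2) : ℕ → Submodule ℂ V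
  | 0 => A.g i
  | k + 1 => Submodule.span ℂ {z | ∃ x ∈ A.g 0, ∃ y ∈ C A i k, z = A.bk x y}

/-- The descending central sequence of the whole superalgebra. -/
def DC (A : LieSuperAlg V) : ℕ → Submodule ℂ V
  | 0 => ⊤
  | k + 1 => Submodule.span ℂ {z | ∃ x ∈ DC A k, ∃ y : V, z = A.bk x y}

/-- Nilpotency: the descending central sequence reaches zero. -/
def IsNilpotent (A : LieSuperAlg V) : Prop := ∃ k, A.DC k = ⊥

/-- `A` is filiform with parameters `(n, m)`: it is nilpotent, `dim g₀ = n + 1`,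
`dim g₁ = m`, and the super-nilindex is `(n, m)` (the maximal one). -/
def IsFiliform (A : LieSuperAlg V) (n m : ℕ) : Prop :=
  A.IsNilpotent ∧ Module.finrank ℂ (A.g 0) = n + 1 ∧ Module.finrank ℂ (A.g 1) = m ∧
    A.C 0 (n - 1) ≠ ⊥ ∧ A.C 1 (m - 1) ≠ ⊥ ∧ A.C 0 n = ⊥ ∧ A.C 1 m = ⊥

/-- Non-degeneracy: the bracket does not vanish identically on `g₁ × g₁`. -/
def NonDegenerate (A : LieSuperAlg V) : Prop :=
  ∃ x ∈ A.g 1, ∃ y ∈ A.g 1, A.bk x y ≠ 0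

/-- `A` is naturally graded: there are subspaces `W a i` (`i ≥ 1`, parity `a`), splitting
the filtrations `C` (so that `W a i ≅ C^{i-1}(g_a)/C^i(g_a)` and `g ≅ gr(g)` in the
natural way) and compatible with the bracket (so `gr(g)` is a graded Lie superalgebra,
`[gⁱ, gʲ] ⊆ g^{i+j}`).  For finite-dimensional nilpotent superalgebras this is
equivalent to the textbook definition `g ≅ gr(g)` with `gr(g)` graded. -/
def NaturallyGraded (A : LieSuperAlg V) : Prop :=
  ∃ W : ZMod 2 → ℕ → Submodule ℂ V,
    (∀ a, W a 0 = ⊥) ∧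
    (∀ a k, A.C a k = W a (k + 1) ⊔ A.C a (k + 1)) ∧
    (∀ a k, W a (k + 1) ⊓ A.C a (k + 1) = ⊥) ∧
    (∀ a b : ZMod 2, ∀ i j : ℕ, ∀ x ∈ W a i, ∀ y ∈ W b j, A.bk x y ∈ W (a + b) (i + j))

/-- `X 0, …, X n` and `Y 1, …, Y m` form an adapted basis of the superalgebra:
the `X i` are even, the `Y j` are odd, and together they form a basis of `V`. -/
def IsAdaptedBasis (A : LieSuperAlg V) (n m : ℕ) (X Y : ℕ → V) : Prop :=
  (∀ i, i ≤ n → X i ∈ A.g 0) ∧ (∀ j, 1 ≤ j → j ≤ m → Y j ∈ A.g 1) ∧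
  LinearIndependent ℂ
    (Sum.elim (fun i : Fin (n + 1) => X i.val) (fun j : Fin m => Y (j.val + 1))) ∧
  Submodule.span ℂ
    (Set.range (Sum.elim (fun i : Fin (n + 1) => X i.val) (fun j : Fin m => Y (j.val + 1)))) = ⊤

end LieSuperAlg

/-- The law `L^{2,m} + φ₁₂`: `[X₀,X₁] = X₂`, `[X₀,Y_j] = Y_{j+1}` for
`1 ≤ j ≤ m-1`, `(Y₁,Y₁) = X₂`, all other products of basis elements being zero
(the `[Y,X]` products are determined by super skew-symmetry). -/
def LawL2m {V : Type*} [AddCommGroup V] [Module ℂ V] (A : LieSuperAlg V) (m : ℕ) : Prop :=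
  ∃ X Y : ℕ → V, A.IsAdaptedBasis 2 m X Y ∧
    (∀ i j : ℕ, i ≤ 2 → j ≤ 2 → A.bk (X i) (X j) =
      if i = 0 ∧ j = 1 then X 2 else if i = 1 ∧ j = 0 then -X 2 else 0) ∧
    (∀ i j : ℕ, i ≤ 2 → 1 ≤ j → j ≤ m → A.bk (X i) (Y j) =
      if i = 0 ∧ j + 1 ≤ m then Y (j + 1) else 0) ∧
    (∀ i j : ℕ, 1 ≤ i → i ≤ m → 1 ≤ j → j ≤ m → A.bk (Y i) (Y j) =
      if i = 1 ∧ j = 1 then X 2 else 0)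


section Aux
open Submodule Module

lemma ssign00 : ssign 0 0 = 1 := if_neg (by decide)
lemma ssign01 : ssign 0 1 = 1 := if_neg (by decide)
lemma ssign10 : ssign 1 0 = 1 := if_neg (by decide)
lemma ssign11 : ssign 1 1 = -1 := if_pos ⟨rfl, rfl⟩

variable {V : Type*} [AddCommGroup V] [Module ℂ V]

lemma half_zero {a : V} (h : a + a = 0) : a = 0 := by
  have h2 : (2:ℂ) • a = 0 := by rw [two_smul]; exact h
  simpa using (smul_eq_zero.mp h2).resolve_left (by norm_num)

lemma three_zero {a : V} (h : a + a + a = 0) : a = 0 := by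
  have h3 : (3:ℂ) • a = 0 := by
    rw [show (3:ℂ) = 1 + 1 + 1 by norm_num, add_smul, add_smul, one_smul]; exact h
  simpa using (smul_eq_zero.mp h3).resolve_left (by norm_num)

namespace LieSuperAlg
variable (A : LieSuperAlg V)

lemma C_zero' (a : ZMod 2) : A.C a 0 = A.g a := rfl

lemma C_succ' (a : ZMod 2) (k : ℕ) :
    A.C a (k+1) = Submodule.span ℂ {z | ∃ x ∈ A.g 0, ∃ y ∈ A.C a k, z = A.bk x y} := rfl

lemma bk_mem_C {a : ZMod 2} {k : ℕ} {x y : V} (hx : x ∈ A.g 0) (hy : y ∈ A.C a k) :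
    A.bk x y ∈ A.C a (k+1) :=
  Submodule.subset_span ⟨x, hx, y, hy, rfl⟩

lemma C_succ_le (a : ZMod 2) : ∀ k, A.C a (k+1) ≤ A.C a k := by
  intro k; induction k with
  | zero =>
    rw [C_succ']
    refine Submodule.span_le.mpr ?_
    rintro z ⟨x, hx, y, hy, rfl⟩
    have := A.grading 0 a x hx y hy
    rwa [zero_add] at this
  | succ k ih =>
    rw [C_succ']
    refine Submodule.span_le.mpr ?_
    rintro z ⟨x, hx, y, hy, rfl⟩
    exact A.bk_mem_C hx (ih hy)

lemma C_anti (a : ZMod 2) {k l : ℕ} (h : k ≤ l) : A.C a l ≤ A.C a k := by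
  induction h with
  | refl => exact le_rfl
  | step h ih => exact le_trans (A.C_succ_le a _) ih

lemma C_stab (a : ZMod 2) (k : ℕ) (h : A.C a (k+1) = A.C a k) :
    ∀ l, k ≤ l → A.C a l = A.C a k := by
  intro l hl
  induction hl with
  | refl => rfl
  | step h' ih => rw [C_succ', ih, ← C_succ', h]

lemma bk_self {x : V} (hx : x ∈ A.g 0) : A.bk x x = 0 := by
  have h := A.skew 0 0 x hx x hx
  rw [ssign00, one_smul] at h
  exact half_zero (add_eq_zero_iff_eq_neg.mpr h)

lemma skew0 {i j : ZMod 2} (hij : ¬(i = 1 ∧ j = 1)) {x y : V}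
    (hx : x ∈ A.g i) (hy : y ∈ A.g j) : A.bk x y = - A.bk y x := by
  have h := A.skew i j x hx y hy
  rwa [ssign, if_neg hij, one_smul] at h

end LieSuperAlg
end Aux

open Submodule Module LieSuperAlg in
/-- Every non-degenerate naturally graded filiform Lie superalgebra with
`dim g₀ = 3` and `dim g₁ = m` as indicated is isomorphic to `L^{2,m} + φ₁₂`. -/
theorem stmt0 {V : Type*} [AddCommGroup V] [Module ℂ V] [FiniteDimensional ℂ V] (A : LieSuperAlg V) (m : ℕ)
    (hm : m = 1 ∨ m = 2 ∨ m = 3 ∨ m = 4)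
    (hfil : A.IsFiliform 2 m) (hnd : A.NonDegenerate) (hng : A.NaturallyGraded) :
    LawL2m A m := by
  classical
  obtain ⟨-, h0dim, h1dim, hC0ne, hC1ne, hC0z, hC1z⟩ := hfil
  obtain ⟨W, hW0, hWC, hWdisj, hWbk⟩ := hng
  have hm1 : 1 ≤ m := by rcases hm with rfl|rfl|rfl|rfl <;> norm_num
  have hm4 : m ≤ 4 := by rcases hm with rfl|rfl|rfl|rfl <;> norm_num
  -- basic containments
  have hWleC : ∀ a k, W a (k+1) ≤ A.C a k := fun a k => (hWC a k) ▸ le_sup_left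
  have hWleg : ∀ a k, W a k ≤ A.g a := by
    intro a k
    cases k with
    | zero => rw [hW0]; exact bot_le
    | succ k => exact (hWleC a k).trans (A.C_anti a (Nat.zero_le k))
  have hW0bot : ∀ k, 3 ≤ k → W 0 k = ⊥ := by
    intro k hk
    obtain ⟨j, rfl⟩ : ∃ j, k = j + 1 := ⟨k - 1, by omega⟩
    refine le_bot_iff.mp ?_
    exact (hWleC 0 j).trans (le_of_le_of_eq (A.C_anti 0 (by omega : 2 ≤ j)) hC0z)
  have hW1bot : ∀ k, m + 1 ≤ k → W 1 k = ⊥ := by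
    intro k hk
    obtain ⟨j, rfl⟩ : ∃ j, k = j + 1 := ⟨k - 1, by omega⟩
    refine le_bot_iff.mp ?_
    exact (hWleC 1 j).trans (le_of_le_of_eq (A.C_anti 1 (by omega : m ≤ j)) hC1z)
  -- helper: graded bracket with normalized indices
  have hWbk' : ∀ (a b c : ZMod 2) (i j k : ℕ), a + b = c → i + j = k →
      ∀ x ∈ W a i, ∀ y ∈ W b j, A.bk x y ∈ W c k := by
    intro a b c i j k h1 h2 x hx y hy
    rw [← h1, ← h2]; exact hWbk a b i j x hx y hy
  have zbk : ∀ (a b c : ZMod 2) (i j k : ℕ), a + b = c → i + j = k → W c k = ⊥ →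
      ∀ x ∈ W a i, ∀ y ∈ W b j, A.bk x y = 0 := by
    intro a b c i j k h1 h2 hbot x hx y hy
    have := hWbk' a b c i j k h1 h2 x hx y hy
    rw [hbot] at this; simpa using this
  -- ranks
  have hrank : ∀ (a : ZMod 2) (k : ℕ),
      finrank ℂ (A.C a k) = finrank ℂ (W a (k+1)) + finrank ℂ (A.C a (k+1)) := by
    intro a k
    have h := Submodule.finrank_sup_add_finrank_inf_eq (W a (k+1)) (A.C a (k+1))
    rw [hWdisj a k, ← hWC a k, finrank_bot, add_zero] at h
    exact h
  have hC01W : A.C 0 1 = W 0 2 := by rw [hWC 0 1, hC0z, sup_bot_eq]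
  have hg0r : finrank ℂ (A.C 0 0) = 3 := h0dim
  have hg1r : finrank ℂ (A.C 1 0) = m := h1dim
  have hC02r : finrank ℂ (A.C 0 2) = 0 := by rw [hC0z]; exact finrank_bot ℂ V
  have h3sum : finrank ℂ (W 0 1) + finrank ℂ (W 0 2) = 3 := by
    have h0 := hrank 0 0; have h1 := hrank 0 1
    simp only [Nat.reduceAdd] at h0 h1; omega
  have hW02ne : W 0 2 ≠ ⊥ := fun h => hC0ne (by rwa [hC01W])
  have hW02pos : 1 ≤ finrank ℂ (W 0 2) := by
    rcases Nat.eq_zero_or_pos (finrank ℂ (W 0 2)) with h|h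
    · exact absurd (Submodule.finrank_eq_zero.mp h) hW02ne
    · exact h

  -- decomposition of g 0 elements
  have hdec : ∀ p q : V, W 0 1 ≤ Submodule.span ℂ {p, q} → ∀ w ∈ A.g 0,
      ∃ a b : ℂ, ∃ w2 ∈ W 0 2, w = a • p + b • q + w2 := by
    intro p q hpq w hw
    have hle : A.g 0 ≤ Submodule.span ℂ {p, q} ⊔ W 0 2 := by
      have hg : A.g 0 = W 0 1 ⊔ A.C 0 1 := hWC 0 0
      rw [hg, hC01W]
      exact sup_le_sup_right hpq _
    obtain ⟨w1, hw1, w2, hw2, rfl⟩ := Submodule.mem_sup.mp (hle hw)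
    obtain ⟨a, b, hab⟩ := Submodule.mem_span_pair.mp hw1
    exact ⟨a, b, w2, hw2, by rw [← hab]⟩
  have evenpair : ∀ p q : V, p ∈ W 0 1 → q ∈ W 0 1 → W 0 1 ≤ Submodule.span ℂ {p, q} →
      A.C 0 1 ≤ ℂ ∙ (A.bk p q) := by
    intro p q hp hq hpq
    rw [A.C_succ' 0 0]
    refine Submodule.span_le.mpr ?_
    rintro z ⟨x, hx, y, hy, rfl⟩
    obtain ⟨a, b, x2, hx2, rfl⟩ := hdec p q hpq x hx
    obtain ⟨c, d, y2, hy2, rfl⟩ := hdec p q hpq y hy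
    have hpp : A.bk p p = 0 := A.bk_self (hWleg 0 1 hp)
    have hqq : A.bk q q = 0 := A.bk_self (hWleg 0 1 hq)
    have hqp : A.bk q p = - A.bk p q := A.skew0 (by decide) (hWleg 0 1 hq) (hWleg 0 1 hp)
    have hW03 : W 0 3 = ⊥ := hW0bot 3 le_rfl
    have hW04 : W 0 4 = ⊥ := hW0bot 4 (by norm_num)
    have hpy2 : A.bk p y2 = 0 := zbk 0 0 0 1 2 3 (by decide) rfl hW03 p hp y2 hy2
    have hqy2 : A.bk q y2 = 0 := zbk 0 0 0 1 2 3 (by decide) rfl hW03 q hq y2 hy2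
    have hx2p : A.bk x2 p = 0 := zbk 0 0 0 2 1 3 (by decide) rfl hW03 x2 hx2 p hp
    have hx2q : A.bk x2 q = 0 := zbk 0 0 0 2 1 3 (by decide) rfl hW03 x2 hx2 q hq
    have hx2y2 : A.bk x2 y2 = 0 := zbk 0 0 0 2 2 4 (by decide) rfl hW04 x2 hx2 y2 hy2
    refine Submodule.mem_span_singleton.mpr ⟨a * d - b * c, ?_⟩
    simp only [map_add, map_smul, LinearMap.add_apply, LinearMap.smul_apply, hpp, hqq, hqp,
      hpy2, hqy2, hx2p, hx2q, hx2y2, smul_zero, add_zero, zero_add, smul_neg]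
    module
  have hr01 : finrank ℂ (W 0 1) = 2 := by
    rcases Nat.lt_or_ge (finrank ℂ (W 0 1)) 2 with hlt|hge
    · exfalso
      have hex : ∃ v ∈ W 0 1, W 0 1 ≤ ℂ ∙ v := by
        rcases Nat.lt_or_ge (finrank ℂ (W 0 1)) 1 with h0|h1
        · refine ⟨0, zero_mem _, ?_⟩
          have hb : W 0 1 = ⊥ := Submodule.finrank_eq_zero.mp (by omega)
          rw [hb]; exact bot_le
        · have hne : W 0 1 ≠ ⊥ := by
            intro h; rw [h, finrank_bot] at h1; omega
          obtain ⟨v, hv, hv0⟩ := Submodule.ne_bot_iff _ |>.mp hne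
          refine ⟨v, hv, ?_⟩
          refine (Submodule.eq_of_le_of_finrank_le ((Submodule.span_singleton_le_iff_mem _ _).mpr hv) ?_).ge
          rw [finrank_span_singleton hv0]; omega
      obtain ⟨v, hv, hvle⟩ := hex
      have h1 : A.C 0 1 ≤ ℂ ∙ (A.bk v v) :=
        evenpair v v hv hv (by rwa [Set.pair_eq_singleton])
      rw [A.bk_self (hWleg 0 1 hv), Submodule.span_zero_singleton] at h1
      exact hC0ne (le_bot_iff.mp h1)
    · omega
  have hr02 : finrank ℂ (W 0 2) = 1 := by omega
  obtain ⟨e', f', he', hf', hspan'⟩ :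
      ∃ p q : V, p ∈ W 0 1 ∧ q ∈ W 0 1 ∧ W 0 1 ≤ Submodule.span ℂ {p, q} := by
    let b := Module.finBasisOfFinrankEq ℂ (W 0 1) hr01
    refine ⟨b 0, b 1, (b 0).2, (b 1).2, ?_⟩
    intro x hx
    have hrep := b.sum_repr ⟨x, hx⟩
    rw [Fin.sum_univ_two] at hrep
    refine Submodule.mem_span_pair.mpr ⟨b.repr ⟨x, hx⟩ 0, b.repr ⟨x, hx⟩ 1, ?_⟩
    simpa using congrArg Subtype.val hrep
  -- odd nonvanishing and ranks
  have hCne1 : ∀ k, k + 1 ≤ m → A.C 1 k ≠ ⊥ := by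
    intro k hk h
    exact hC1ne (le_bot_iff.mp ((A.C_anti 1 (by omega : k ≤ m - 1)).trans h.le))
  have hWne : ∀ k, 1 ≤ k → k ≤ m → W 1 k ≠ ⊥ := by
    intro k h1 h2 hbot
    obtain ⟨j, rfl⟩ : ∃ j, k = j + 1 := ⟨k - 1, by omega⟩
    have heq : A.C 1 (j+1) = A.C 1 j := by
      rw [hWC 1 j, hbot, bot_sup_eq]
    have hst := A.C_stab 1 j heq m (by omega)
    exact hCne1 j (by omega) (by rw [← hst]; exact hC1z)
  have hWpos : ∀ k, 1 ≤ k → k ≤ m → 1 ≤ finrank ℂ (W 1 k) := by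
    intro k h1 h2
    rcases Nat.eq_zero_or_pos (finrank ℂ (W 1 k)) with h|h
    · exact absurd (Submodule.finrank_eq_zero.mp h) (hWne k h1 h2)
    · exact h
  have hrk1 : ∀ k, 1 ≤ k → k ≤ m → finrank ℂ (W 1 k) = 1 := by
    have h0 := hrank 1 0; have h1 := hrank 1 1; have h2 := hrank 1 2; have h3 := hrank 1 3
    simp only [Nat.reduceAdd] at h0 h1 h2 h3
    have hbr : finrank ℂ (A.C 1 m) = 0 := by rw [hC1z]; exact finrank_bot ℂ V
    intro k hk1 hk2
    have p1 := hWpos 1 (by omega) (by omega)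
    rcases hm with rfl|rfl|rfl|rfl
    · interval_cases k <;> omega
    · have p2 := hWpos 2 (by omega) (by omega)
      interval_cases k <;> omega
    · have p2 := hWpos 2 (by omega) (by omega); have p3 := hWpos 3 (by omega) (by omega)
      interval_cases k <;> omega
    · have p2 := hWpos 2 (by omega) (by omega); have p3 := hWpos 3 (by omega) (by omega)
      have p4 := hWpos 4 (by omega) (by omega)
      interval_cases k <;> omega
  obtain ⟨u, hu, hu0⟩ := Submodule.ne_bot_iff _ |>.mp (hWne 1 le_rfl hm1)
  have hW11 : W 1 1 = ℂ ∙ u := by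
    refine (Submodule.eq_of_le_of_finrank_le ((Submodule.span_singleton_le_iff_mem _ _).mpr hu) ?_).symm
    rw [finrank_span_singleton hu0, hrk1 1 le_rfl hm1]

  have hgu : u ∈ A.g 1 := hWleg 1 1 hu
  have hX2mem : A.bk u u ∈ W 0 2 := hWbk' 1 1 0 1 1 2 (by decide) rfl u hu u hu
  have hgX2 : A.bk u u ∈ A.g 0 := hWleg 0 2 hX2mem
  have huX2 : A.bk u (A.bk u u) = 0 := by
    have h := A.jacobi 1 1 1 u hgu u hgu u hgu
    rw [ssign11, neg_one_smul] at h
    refine three_zero ?_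
    have h2 := congrArg Neg.neg h
    simp only [neg_add, neg_neg, neg_zero] at h2
    exact h2
  have hX2u : A.bk (A.bk u u) u = 0 := by
    rw [A.skew0 (by decide) hgX2 hgu, huX2, neg_zero]
  have hX20 : A.bk u u ≠ 0 := by
    intro h0
    obtain ⟨x, hx, y, hy, hxy⟩ := hnd
    apply hxy
    have WW : ∀ i j, 1 ≤ i → 1 ≤ j → ∀ x ∈ W 1 i, ∀ y ∈ W 1 j, A.bk x y = 0 := by
      intro i j hi hj x hx y hy
      rcases Nat.lt_or_ge (i+j) 3 with h|h
      · have hi1 : i = 1 := by omega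
        have hj1 : j = 1 := by omega
        subst hi1; subst hj1
        obtain ⟨a, ha⟩ := Submodule.mem_span_singleton.mp (hW11 ▸ hx)
        obtain ⟨b, hb⟩ := Submodule.mem_span_singleton.mp (hW11 ▸ hy)
        rw [← ha, ← hb]
        simp [map_smul, LinearMap.smul_apply, h0]
      · exact zbk 1 1 0 i j (i+j) (by decide) rfl (hW0bot _ h) x hx y hy
    have CW : ∀ d k, m ≤ k + d → ∀ x ∈ A.C 1 k, ∀ j, 1 ≤ j → ∀ y ∈ W 1 j, A.bk x y = 0 := by
      intro d
      induction d with
      | zero =>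
        intro k hk x hx j hj y hy
        have hx0 : x = 0 := by
          have hb := (A.C_anti 1 (by omega : m ≤ k)).trans (le_of_eq hC1z)
          simpa using hb hx
        rw [hx0]; simp
      | succ d ih =>
        intro k hk x hx j hj y hy
        rcases Nat.lt_or_ge k m with hkm|hkm
        · rw [hWC 1 k] at hx
          obtain ⟨w, hw, x', hx', rfl⟩ := Submodule.mem_sup.mp hx
          have h1 : A.bk w y = 0 := WW (k+1) j (by omega) hj w hw y hy
          have h2 : A.bk x' y = 0 := ih (k+1) (by omega) x' hx' j hj y hy
          rw [map_add, LinearMap.add_apply, h1, h2, add_zero]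
        · have hx0 : x = 0 := by
            have hb := (A.C_anti 1 hkm).trans (le_of_eq hC1z)
            simpa using hb hx
          rw [hx0]; simp
    have CC : ∀ d l, m ≤ l + d → ∀ x ∈ A.C 1 0, ∀ y ∈ A.C 1 l, A.bk x y = 0 := by
      intro d
      induction d with
      | zero =>
        intro l hl x hx y hy
        have hy0 : y = 0 := by
          have hb := (A.C_anti 1 (by omega : m ≤ l)).trans (le_of_eq hC1z)
          simpa using hb hy
        rw [hy0]; simp
      | succ d ih =>
        intro l hl x hx y hy
        rcases Nat.lt_or_ge l m with hlm|hlm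
        · rw [hWC 1 l] at hy
          obtain ⟨w, hw, y', hy', rfl⟩ := Submodule.mem_sup.mp hy
          have h1 : A.bk x w = 0 := CW m 0 (by omega) x hx (l+1) (by omega) w hw
          have h2 : A.bk x y' = 0 := ih (l+1) (by omega) x hx y' hy'
          rw [map_add, h1, h2, add_zero]
        · have hy0 : y = 0 := by
            have hb := (A.C_anti 1 hlm).trans (le_of_eq hC1z)
            simpa using hb hy
          rw [hy0]; simp
    exact CC m 0 (by omega) x hx y hy
  have hW02span : W 0 2 = ℂ ∙ (A.bk u u) := by
    refine (Submodule.eq_of_le_of_finrank_le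
      ((Submodule.span_singleton_le_iff_mem _ _).mpr hX2mem) ?_).symm
    rw [finrank_span_singleton hX20, hr02]
  have cancel : ∀ k (S : Submodule ℂ V), S ≤ W 1 (k+1) → A.C 1 k ≤ S ⊔ A.C 1 (k+1) →
      W 1 (k+1) ≤ S := by
    intro k S hSW hCS w hw
    obtain ⟨s, hs, c, hc, hw'⟩ := Submodule.mem_sup.mp (hCS (hWleC 1 k hw))
    have hcW : c ∈ W 1 (k+1) := by
      have hcs : c = w - s := eq_sub_of_add_eq' hw'
      rw [hcs]; exact sub_mem hw (hSW hs)
    have hc0 : c = 0 := by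
      have hd := hWdisj 1 k
      rw [Submodule.eq_bot_iff] at hd
      exact hd c ⟨hcW, hc⟩
    rw [← hw', hc0, add_zero]; exact hs
  have surj : ∀ p q : V, p ∈ W 0 1 → q ∈ W 0 1 → W 0 1 ≤ Submodule.span ℂ {p, q} →
      ∀ (k : ℕ) (yk : V), yk ∈ W 1 (k+1) → W 1 (k+1) ≤ Submodule.span ℂ {yk} →
      W 1 (k+2) ≤ Submodule.span ℂ {A.bk p yk, A.bk q yk} := by
    intro p q hp hq hpq k yk hyk hykle
    have hSW : Submodule.span ℂ {A.bk p yk, A.bk q yk} ≤ W 1 (k+2) := by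
      refine Submodule.span_le.mpr ?_
      intro z hz
      simp only [Set.mem_insert_iff, Set.mem_singleton_iff] at hz
      rcases hz with rfl|rfl
      · exact hWbk' 0 1 1 1 (k+1) (k+2) (by decide) (by omega) p hp yk hyk
      · exact hWbk' 0 1 1 1 (k+1) (k+2) (by decide) (by omega) q hq yk hyk
    refine cancel (k+1) _ hSW ?_
    rw [A.C_succ' 1 k]
    refine Submodule.span_le.mpr ?_
    rintro z ⟨x, hx, y, hy, rfl⟩
    rw [hWC 1 k] at hy
    obtain ⟨w, hw, y', hy', rfl⟩ := Submodule.mem_sup.mp hy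
    obtain ⟨cw, hcw⟩ := Submodule.mem_span_singleton.mp (hykle hw)
    obtain ⟨a, b, x2, hx2, rfl⟩ := hdec p q hpq x hx
    rw [← hcw]
    have m1 : A.bk p yk ∈ Submodule.span ℂ {A.bk p yk, A.bk q yk} ⊔ A.C 1 (k+2) :=
      Submodule.mem_sup_left (Submodule.subset_span (Set.mem_insert _ _))
    have m2 : A.bk q yk ∈ Submodule.span ℂ {A.bk p yk, A.bk q yk} ⊔ A.C 1 (k+2) :=
      Submodule.mem_sup_left (Submodule.subset_span (Set.mem_insert_of_mem _ rfl))
    have m3 : A.bk x2 yk ∈ Submodule.span ℂ {A.bk p yk, A.bk q yk} ⊔ A.C 1 (k+2) :=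
      Submodule.mem_sup_right ((hWleC 1 (k+2))
        (hWbk' 0 1 1 2 (k+1) (k+3) (by decide) (by omega) x2 hx2 yk hyk))
    have m4 : A.bk (a•p + b•q + x2) y' ∈
        Submodule.span ℂ {A.bk p yk, A.bk q yk} ⊔ A.C 1 (k+2) :=
      Submodule.mem_sup_right (A.bk_mem_C hx hy')
    have hexp : A.bk (a•p + b•q + x2) (cw • yk + y') =
        cw • (a • A.bk p yk + b • A.bk q yk + A.bk x2 yk) + A.bk (a•p + b•q + x2) y' := by
      simp only [map_add, map_smul, LinearMap.add_apply, LinearMap.smul_apply]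
      try module
    rw [hexp]
    exact add_mem (Submodule.smul_mem _ _
      (add_mem (add_mem (Submodule.smul_mem _ _ m1) (Submodule.smul_mem _ _ m2)) m3)) m4
  have hW11le : W 1 1 ≤ ℂ ∙ u := le_of_eq hW11
  obtain ⟨e, f, he, hf, hef, hfu⟩ :
      ∃ e f : V, e ∈ W 0 1 ∧ f ∈ W 0 1 ∧ W 0 1 ≤ Submodule.span ℂ {e, f} ∧ A.bk f u = 0 := by
    by_cases h2m : 2 ≤ m
    · by_cases hbe : A.bk e' u = 0
      · exact ⟨f', e', hf', he', by rwa [Set.pair_comm], hbe⟩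
      · have h12 : W 1 2 = ℂ ∙ (A.bk e' u) := by
          refine (Submodule.eq_of_le_of_finrank_le ((Submodule.span_singleton_le_iff_mem _ _).mpr
            (hWbk' 0 1 1 1 1 2 (by decide) rfl e' he' u hu)) ?_).symm
          rw [finrank_span_singleton hbe, hrk1 2 (by omega) h2m]
        have hfu' : A.bk f' u ∈ ℂ ∙ (A.bk e' u) := by
          rw [← h12]; exact hWbk' 0 1 1 1 1 2 (by decide) rfl f' hf' u hu
        obtain ⟨c, hc⟩ := Submodule.mem_span_singleton.mp hfu'
        refine ⟨e', f' - c • e', he', sub_mem hf' (Submodule.smul_mem _ _ he'), ?_, ?_⟩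
        · refine hspan'.trans (Submodule.span_le.mpr ?_)
          intro z hz
          simp only [Set.mem_insert_iff, Set.mem_singleton_iff] at hz
          rcases hz with rfl|rfl
          · exact Submodule.subset_span (Set.mem_insert _ _)
          · refine Submodule.mem_span_pair.mpr ⟨c, 1, ?_⟩
            module
        · rw [map_sub, LinearMap.sub_apply, map_smul, LinearMap.smul_apply, ← hc, sub_self]
    · refine ⟨e', f', he', hf', hspan', ?_⟩
      have h := hWbk' 0 1 1 1 1 2 (by decide) rfl f' hf' u hu
      rw [hW1bot 2 (by omega)] at h
      simpa using h

  -- mu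
  have hge : e ∈ A.g 0 := hWleg 0 1 he
  have hgf : f ∈ A.g 0 := hWleg 0 1 hf
  have hbef : A.bk e f ∈ W 0 2 := hWbk' 0 0 0 1 1 2 (by decide) rfl e he f hf
  have hbef0 : A.bk e f ≠ 0 := by
    intro h
    have h1 := evenpair e f he hf hef
    rw [h, Submodule.span_zero_singleton] at h1
    exact hC0ne (le_bot_iff.mp h1)
  obtain ⟨μ, hμ⟩ := Submodule.mem_span_singleton.mp (hW02span ▸ hbef)
  have hμ0 : μ ≠ 0 := by
    rintro rfl; rw [zero_smul] at hμ; exact hbef0 hμ.symm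
  -- odd chain memberships
  have hy2mem : A.bk e u ∈ W 1 2 := hWbk' 0 1 1 1 1 2 (by decide) rfl e he u hu
  have hy3mem : A.bk e (A.bk e u) ∈ W 1 3 :=
    hWbk' 0 1 1 1 2 3 (by decide) rfl e he _ hy2mem
  have hy4mem : A.bk e (A.bk e (A.bk e u)) ∈ W 1 4 :=
    hWbk' 0 1 1 1 3 4 (by decide) rfl e he _ hy3mem
  have hgy2 : A.bk e u ∈ A.g 1 := hWleg 1 2 hy2mem
  have hgy3 : A.bk e (A.bk e u) ∈ A.g 1 := hWleg 1 3 hy3mem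
  have hgy4 : A.bk e (A.bk e (A.bk e u)) ∈ A.g 1 := hWleg 1 4 hy4mem
  -- Jacobi consequences
  have hfy2 : A.bk f (A.bk e u) = 0 := by
    have hj := A.jacobi 0 0 1 e hge f hgf u hgu
    rw [ssign10, ssign00, ssign01, one_smul, one_smul, one_smul, hfu, map_zero] at hj
    have hue : A.bk u e = - A.bk e u := A.skew0 (by decide) hgu hge
    rw [hue, map_neg, ← hμ, map_smul, huX2, smul_zero, zero_add, add_zero] at hj
    simpa using hj
  have hX2y2 : A.bk (A.bk e u) (A.bk u u) = 0 := by
    have hj := A.jacobi 1 1 1 u hgu u hgu (A.bk e u) hgy2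
    rw [ssign11] at hj
    simp only [neg_one_smul] at hj
    have hz1 : A.bk u (A.bk e u) = 0 :=
      zbk 1 1 0 1 2 3 (by decide) rfl (hW0bot 3 le_rfl) u hu _ hy2mem
    have hz2 : A.bk (A.bk e u) u = 0 :=
      zbk 1 1 0 2 1 3 (by decide) rfl (hW0bot 3 le_rfl) _ hy2mem u hu
    rw [hz1, hz2, map_zero] at hj
    simpa using hj
  have hX2y2' : A.bk (A.bk u u) (A.bk e u) = 0 := by
    rw [A.skew0 (by decide) hgX2 hgy2, hX2y2, neg_zero]
  have hfy3 : A.bk f (A.bk e (A.bk e u)) = 0 := by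
    have hj := A.jacobi 0 0 1 e hge f hgf (A.bk e u) hgy2
    rw [ssign10, ssign00, ssign01, one_smul, one_smul, one_smul, hfy2, map_zero] at hj
    have hue : A.bk (A.bk e u) e = - A.bk e (A.bk e u) := A.skew0 (by decide) hgy2 hge
    rw [hue, map_neg, ← hμ, map_smul, hX2y2, smul_zero, zero_add, add_zero] at hj
    simpa using hj
  have hfy4 : A.bk f (A.bk e (A.bk e (A.bk e u))) = 0 :=
    zbk 0 1 1 1 4 5 (by decide) rfl (hW1bot 5 (by omega)) f hf _ hy4mem
  -- spans of odd levels
  have hsurj2 : W 1 2 ≤ Submodule.span ℂ {A.bk e u} := by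
    refine (surj e f he hf hef 0 u hu (le_of_eq hW11)).trans (Submodule.span_le.mpr ?_)
    intro z hz
    simp only [Set.mem_insert_iff, Set.mem_singleton_iff] at hz
    rcases hz with rfl|rfl
    · exact Submodule.mem_span_singleton_self _
    · rw [hfu]; exact zero_mem _
  have hsurj3 : W 1 3 ≤ Submodule.span ℂ {A.bk e (A.bk e u)} := by
    refine (surj e f he hf hef 1 (A.bk e u) hy2mem hsurj2).trans (Submodule.span_le.mpr ?_)
    intro z hz
    simp only [Set.mem_insert_iff, Set.mem_singleton_iff] at hz
    rcases hz with rfl|rfl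
    · exact Submodule.mem_span_singleton_self _
    · rw [hfy2]; exact zero_mem _
  have hsurj4 : W 1 4 ≤ Submodule.span ℂ {A.bk e (A.bk e (A.bk e u))} := by
    refine (surj e f he hf hef 2 (A.bk e (A.bk e u)) hy3mem hsurj3).trans
      (Submodule.span_le.mpr ?_)
    intro z hz
    simp only [Set.mem_insert_iff, Set.mem_singleton_iff] at hz
    rcases hz with rfl|rfl
    · exact Submodule.mem_span_singleton_self _
    · rw [hfy3]; exact zero_mem _
  -- even zero brackets
  have heX2 : A.bk e (A.bk u u) = 0 :=
    zbk 0 0 0 1 2 3 (by decide) rfl (hW0bot 3 le_rfl) e he _ hX2mem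
  have hfX2 : A.bk f (A.bk u u) = 0 :=
    zbk 0 0 0 1 2 3 (by decide) rfl (hW0bot 3 le_rfl) f hf _ hX2mem
  have hX2e : A.bk (A.bk u u) e = 0 := by
    rw [A.skew0 (by decide) hgX2 hge, heX2, neg_zero]
  have hX2f : A.bk (A.bk u u) f = 0 := by
    rw [A.skew0 (by decide) hgX2 hgf, hfX2, neg_zero]
  -- X2 against odd, high levels
  have hX2y3 : A.bk (A.bk u u) (A.bk e (A.bk e u)) = 0 :=
    zbk 0 1 1 2 3 5 (by decide) rfl (hW1bot 5 (by omega)) _ hX2mem _ hy3mem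
  have hX2y4 : A.bk (A.bk u u) (A.bk e (A.bk e (A.bk e u))) = 0 :=
    zbk 0 1 1 2 4 6 (by decide) rfl (hW1bot 6 (by omega)) _ hX2mem _ hy4mem
  -- f recovery
  have hfP : ∀ (P : Submodule ℂ V), (μ⁻¹ • f) ∈ P → f ∈ P := by
    intro P h2
    have h3 := Submodule.smul_mem P μ h2
    rwa [smul_smul, mul_inv_cancel₀ hμ0, one_smul] at h3
  have hg0dec : A.g 0 = W 0 1 ⊔ W 0 2 := by
    rw [← hC01W]; exact hWC 0 0
  -- generic top-le-span
  have htop : ∀ (P : Submodule ℂ V), e ∈ P → (μ⁻¹ • f) ∈ P → A.bk u u ∈ P → u ∈ P →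
      (2 ≤ m → A.bk e u ∈ P) → (3 ≤ m → A.bk e (A.bk e u) ∈ P) →
      (4 ≤ m → A.bk e (A.bk e (A.bk e u)) ∈ P) → ⊤ ≤ P := by
    intro P h1 h2 h3 h4 h5 h6 h7
    rw [← A.compl.sup_eq_top]
    refine sup_le ?_ ?_
    · rw [hg0dec]
      refine sup_le (hef.trans (Submodule.span_le.mpr ?_)) ?_
      · intro z hz
        simp only [Set.mem_insert_iff, Set.mem_singleton_iff] at hz
        rcases hz with rfl|rfl
        · exact h1
        · exact hfP P h2
      · rw [hW02span]
        exact (Submodule.span_singleton_le_iff_mem _ _).mpr h3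
    · have hWP : ∀ j, 1 ≤ j → j ≤ m → W 1 j ≤ P := by
        intro j hj1 hj2
        have hj2' := hj2
        have hj4 : j ≤ 4 := le_trans hj2 hm4
        interval_cases j
        · rw [hW11]; exact (Submodule.span_singleton_le_iff_mem _ _).mpr h4
        · exact hsurj2.trans ((Submodule.span_singleton_le_iff_mem _ _).mpr (h5 hj2'))
        · exact hsurj3.trans ((Submodule.span_singleton_le_iff_mem _ _).mpr (h6 hj2'))
        · exact hsurj4.trans ((Submodule.span_singleton_le_iff_mem _ _).mpr (h7 hj2'))
      have hCP : ∀ d k, m ≤ k + d → A.C 1 k ≤ P := by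
        intro d
        induction d with
        | zero =>
          intro k hk
          exact ((A.C_anti 1 (by omega : m ≤ k)).trans (le_of_eq hC1z)).trans bot_le
        | succ d ih =>
          intro k hk
          rcases Nat.lt_or_ge k m with h|h
          · rw [hWC 1 k]
            exact sup_le (hWP (k+1) (by omega) (by omega)) (ih (k+1) (by omega))
          · exact ((A.C_anti 1 h).trans (le_of_eq hC1z)).trans bot_le
      exact hCP m 0 (by omega)
  have hcard : Fintype.card (Fin (2+1) ⊕ Fin m) = finrank ℂ V := by
    have hfr := Submodule.finrank_add_eq_of_isCompl A.compl
    simp only [Fintype.card_sum, Fintype.card_fin]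
    rw [← hfr, h0dim, h1dim]
  -- assemble
  refine ⟨(fun i => if i = 0 then e else if i = 1 then μ⁻¹ • f else if i = 2 then A.bk u u else 0),
    (fun j => if j = 1 then u else if j = 2 then A.bk e u else if j = 3 then A.bk e (A.bk e u)
      else if j = 4 then A.bk e (A.bk e (A.bk e u)) else 0), ⟨?_, ?_, ?_, ?_⟩, ?_, ?_, ?_⟩
  · -- evens in g 0
    intro i hi
    interval_cases i
    · simpa using hge
    · simpa using Submodule.smul_mem _ _ hgf
    · simpa using hgX2
  · -- odds in g 1
    intro j h1 h2
    have h4 : j ≤ 4 := le_trans h2 hm4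
    interval_cases j
    · simpa using hgu
    · simpa using hgy2
    · simpa using hgy3
    · simpa using hgy4
  · -- linear independence
    refine linearIndependent_of_top_le_span_of_card_eq_finrank ?_ hcard
    refine htop _ ?_ ?_ ?_ ?_ ?_ ?_ ?_
    · exact Submodule.subset_span ⟨Sum.inl ⟨0, by omega⟩, rfl⟩
    · exact Submodule.subset_span ⟨Sum.inl ⟨1, by omega⟩, rfl⟩
    · exact Submodule.subset_span ⟨Sum.inl ⟨2, by omega⟩, rfl⟩
    · exact Submodule.subset_span ⟨Sum.inr ⟨0, by omega⟩, rfl⟩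
    · exact fun h => Submodule.subset_span ⟨Sum.inr ⟨1, by omega⟩, rfl⟩
    · exact fun h => Submodule.subset_span ⟨Sum.inr ⟨2, by omega⟩, rfl⟩
    · exact fun h => Submodule.subset_span ⟨Sum.inr ⟨3, by omega⟩, rfl⟩
  · -- spanning
    apply le_antisymm le_top
    refine htop _ ?_ ?_ ?_ ?_ ?_ ?_ ?_
    · exact Submodule.subset_span ⟨Sum.inl ⟨0, by omega⟩, rfl⟩
    · exact Submodule.subset_span ⟨Sum.inl ⟨1, by omega⟩, rfl⟩
    · exact Submodule.subset_span ⟨Sum.inl ⟨2, by omega⟩, rfl⟩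
    · exact Submodule.subset_span ⟨Sum.inr ⟨0, by omega⟩, rfl⟩
    · exact fun h => Submodule.subset_span ⟨Sum.inr ⟨1, by omega⟩, rfl⟩
    · exact fun h => Submodule.subset_span ⟨Sum.inr ⟨2, by omega⟩, rfl⟩
    · exact fun h => Submodule.subset_span ⟨Sum.inr ⟨3, by omega⟩, rfl⟩
  · -- X-X products
    intro i j hi hj
    interval_cases i <;> interval_cases j <;> norm_num
    · exact A.bk_self hge
    · rw [← hμ, smul_smul, inv_mul_cancel₀ hμ0, one_smul]
    · exact heX2
    · rw [A.skew0 (by decide) hgf hge, ← hμ, smul_neg, smul_smul, inv_mul_cancel₀ hμ0, one_smul]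
    · exact Or.inr (A.bk_self hgf)
    · exact Or.inr hfX2
    · exact hX2e
    · exact Or.inr hX2f
    · exact A.bk_self hgX2
  · -- X-Y products
    intro i j hi hj1 hjm
    have hj4 : j ≤ 4 := le_trans hjm hm4
    interval_cases i
    · interval_cases j <;> norm_num
      · rcases Nat.lt_or_ge m 2 with h|h
        · intro _
          exact zbk 0 1 1 1 1 2 (by decide) rfl (hW1bot 2 (by omega)) e he u hu
        · intro h'
          exact absurd h' (by omega)
      · rcases Nat.lt_or_ge m 3 with h|h
        · intro _
          exact zbk 0 1 1 1 2 3 (by decide) rfl (hW1bot 3 (by omega)) e he _ hy2mem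
        · intro h'
          exact absurd h' (by omega)
      · rcases Nat.lt_or_ge m 4 with h|h
        · intro _
          exact zbk 0 1 1 1 3 4 (by decide) rfl (hW1bot 4 (by omega)) e he _ hy3mem
        · intro h'
          exact absurd h' (by omega)
      · exact zbk 0 1 1 1 4 5 (by decide) rfl (hW1bot 5 (by omega)) e he _ hy4mem
    · interval_cases j <;> norm_num
      · exact Or.inr hfu
      · exact Or.inr hfy2
      · exact Or.inr hfy3
      · exact Or.inr hfy4
    · interval_cases j <;> norm_num
      · exact hX2u
      · exact hX2y2'
      · exact hX2y3
      · exact hX2y4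
  · -- Y-Y products
    intro i j hi1 him hj1 hjm
    have hi4 : i ≤ 4 := le_trans him hm4
    have hj4 : j ≤ 4 := le_trans hjm hm4
    have hb3 := hW0bot 3 (by omega)
    have hb4 := hW0bot 4 (by omega)
    have hb5 := hW0bot 5 (by omega)
    have hb6 := hW0bot 6 (by omega)
    have hb7 := hW0bot 7 (by omega)
    have hb8 := hW0bot 8 (by omega)
    interval_cases i <;> interval_cases j <;> norm_num
    · exact zbk 1 1 0 1 2 3 (by decide) rfl hb3 u hu _ hy2mem
    · exact zbk 1 1 0 1 3 4 (by decide) rfl hb4 u hu _ hy3mem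
    · exact zbk 1 1 0 1 4 5 (by decide) rfl hb5 u hu _ hy4mem
    · exact zbk 1 1 0 2 1 3 (by decide) rfl hb3 _ hy2mem u hu
    · exact zbk 1 1 0 2 2 4 (by decide) rfl hb4 _ hy2mem _ hy2mem
    · exact zbk 1 1 0 2 3 5 (by decide) rfl hb5 _ hy2mem _ hy3mem
    · exact zbk 1 1 0 2 4 6 (by decide) rfl hb6 _ hy2mem _ hy4mem
    · exact zbk 1 1 0 3 1 4 (by decide) rfl hb4 _ hy3mem u hu
    · exact zbk 1 1 0 3 2 5 (by decide) rfl hb5 _ hy3mem _ hy2mem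
    · exact zbk 1 1 0 3 3 6 (by decide) rfl hb6 _ hy3mem _ hy3mem
    · exact zbk 1 1 0 3 4 7 (by decide) rfl hb7 _ hy3mem _ hy4mem
    · exact zbk 1 1 0 4 1 5 (by decide) rfl hb5 _ hy4mem u hu
    · exact zbk 1 1 0 4 2 6 (by decide) rfl hb6 _ hy4mem _ hy2mem
    · exact zbk 1 1 0 4 3 7 (by decide) rfl hb7 _ hy4mem _ hy3mem
    · exact zbk 1 1 0 4 4 8 (by decide) rfl hb8 _ hy4mem _ hy4mem
end

section
/- Let g = g₀ ⊕ g₁ be a non-degenerate filiform Lie superalgebra over ℂ with dim g₀ = 5 (i.e. n = 4) and dim g₁ = 2. If g is naturally graded, then g is isomorphic to the Lie superalgebra with basis {X₀,X₁,X₂,X₃,X₄,Y₁,Y₂} and law [X₀,X_i] = X_{i+1} for 1 ≤ i ≤ 3, [X₀,Y₁] = Y₂, (Y₁,Y₁) = 2X₂, (Y₁,Y₂) = X₃, (Y₂,Y₂) = X₄. -/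
section Helpers

open Submodule Module

variable {V : Type*} [AddCommGroup V] [Module ℂ V]

lemma exists_good_pair {u1 u2 v1 v2 : ℂ} (hu : ¬(u1 = 0 ∧ u2 = 0)) (hv : ¬(v1 = 0 ∧ v2 = 0)) :
    ∃ a b : ℂ, a * u1 + b * u2 ≠ 0 ∧ a * v1 + b * v2 ≠ 0 := by
  obtain ⟨a1, b1, h1⟩ : ∃ a b : ℂ, a * u1 + b * u2 ≠ 0 := by
    rcases not_and_or.1 hu with h | h
    · exact ⟨1, 0, by simpa using h⟩
    · exact ⟨0, 1, by simpa using h⟩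
  obtain ⟨a2, b2, h2⟩ : ∃ a b : ℂ, a * v1 + b * v2 ≠ 0 := by
    rcases not_and_or.1 hv with h | h
    · exact ⟨1, 0, by simpa using h⟩
    · exact ⟨0, 1, by simpa using h⟩
  by_cases hc1 : a1 * v1 + b1 * v2 = 0
  · by_cases hc2 : a2 * u1 + b2 * u2 = 0
    · refine ⟨a1 + a2, b1 + b2, ?_, ?_⟩
      · have e : (a1 + a2) * u1 + (b1 + b2) * u2 = (a1 * u1 + b1 * u2) + (a2 * u1 + b2 * u2) := by
          ring
        rw [e, hc2, add_zero]; exact h1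
      · have e : (a1 + a2) * v1 + (b1 + b2) * v2 = (a1 * v1 + b1 * v2) + (a2 * v1 + b2 * v2) := by
          ring
        rw [e, hc1, zero_add]; exact h2
    · exact ⟨a2, b2, hc2, h2⟩
  · exact ⟨a1, b1, h1, hc1⟩

lemma span_single_of_finrank_one [FiniteDimensional ℂ V] {p : Submodule ℂ V}
    (h : finrank ℂ p = 1) {v : V} (hv : v ∈ p) (h0 : v ≠ 0) : Submodule.span ℂ {v} = p :=
  Submodule.eq_of_le_of_finrank_le ((span_singleton_le_iff_mem _ _).2 hv)
    (by rw [finrank_span_singleton h0, h])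

lemma span_coe_basis {p : Submodule ℂ V} {n : ℕ} (b : Basis (Fin n) ℂ p) :
    Submodule.span ℂ (Set.range fun i => (b i : V)) = p := by
  have h := congrArg (Submodule.map p.subtype) b.span_eq
  rwa [Submodule.map_span, Submodule.map_subtype_top, ← Set.range_comp] at h

end Helpers

open Submodule Module

/-- Every non-degenerate naturally graded filiform Lie superalgebra with
`dim g₀ = 5` and `dim g₁ = 2` is isomorphic to `L^{4,2} + φ̄₂₄`:
`[X₀,X_i] = X_{i+1}` (`1 ≤ i ≤ 3`), `[X₀,Y₁] = Y₂`, `(Y₁,Y₁) = 2X₂`,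
`(Y₁,Y₂) = X₃`, `(Y₂,Y₂) = X₄`. -/
theorem stmt2 {V : Type*} [AddCommGroup V] [Module ℂ V] [FiniteDimensional ℂ V] (A : LieSuperAlg V)
    (hfil : A.IsFiliform 4 2) (hnd : A.NonDegenerate) (hng : A.NaturallyGraded) :
    ∃ X Y : ℕ → V, A.IsAdaptedBasis 4 2 X Y ∧
    (∀ i j : ℕ, i ≤ 4 → j ≤ 4 → A.bk (X i) (X j) =
      if i = 0 ∧ 1 ≤ j ∧ j ≤ 3 then X (j + 1)
      else if j = 0 ∧ 1 ≤ i ∧ i ≤ 3 then -X (i + 1) else 0) ∧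
    (∀ i j : ℕ, i ≤ 4 → 1 ≤ j → j ≤ 2 → A.bk (X i) (Y j) =
      if i = 0 ∧ j = 1 then Y 2 else 0) ∧
    (∀ i j : ℕ, 1 ≤ i → i ≤ 2 → 1 ≤ j → j ≤ 2 → A.bk (Y i) (Y j) =
      if i = 1 ∧ j = 1 then (2 : ℂ) • X 2
      else if (i = 1 ∧ j = 2) ∨ (i = 2 ∧ j = 1) then X 3
      else if i = 2 ∧ j = 2 then X 4 else 0) := by
  obtain ⟨W, hW0, hC, hdisj, hWbk⟩ := hng
  have hdim0 : finrank ℂ (A.g 0) = 5 := hfil.2.1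
  have hdim1 : finrank ℂ (A.g 1) = 2 := hfil.2.2.1
  have hC03 : A.C 0 3 ≠ ⊥ := hfil.2.2.2.1
  have hC11 : A.C 1 1 ≠ ⊥ := hfil.2.2.2.2.1
  have hC04 : A.C 0 4 = ⊥ := hfil.2.2.2.2.2.1
  have hC12 : A.C 1 2 = ⊥ := hfil.2.2.2.2.2.2
  have hCsucc : ∀ a k, A.C a (k+1) =
      Submodule.span ℂ {z | ∃ x ∈ A.g 0, ∃ y ∈ A.C a k, z = A.bk x y} := fun a k => rfl
  have hCmono : ∀ a k, A.C a (k+1) ≤ A.C a k := fun a k => (hC a k) ▸ le_sup_right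
  have hWleC : ∀ a k, W a (k+1) ≤ A.C a k := fun a k => (hC a k) ▸ le_sup_left
  have hCleG : ∀ a k, A.C a k ≤ A.g a := by
    intro a k
    induction k with
    | zero => exact le_rfl
    | succ n ih => exact (hCmono a n).trans ih
  have hWleG : ∀ a k, W a k ≤ A.g a := by
    intro a k
    cases k with
    | zero => exact (hW0 a) ▸ bot_le
    | succ n => exact (hWleC a n).trans (hCleG a n)
  have hCbot : ∀ a k, A.C a k = ⊥ → A.C a (k+1) = ⊥ := by
    intro a k h
    rw [hCsucc]
    refine le_bot_iff.1 (Submodule.span_le.2 ?_)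
    rintro z ⟨x, hx, y, hy, rfl⟩
    rw [h, Submodule.mem_bot] at hy
    simp [hy]
  have hCcongr : ∀ a k l, A.C a k = A.C a l → A.C a (k+1) = A.C a (l+1) := by
    intro a k l h
    rw [hCsucc, hCsucc, h]
  have hstab : ∀ a k, A.C a k = A.C a (k+1) → ∀ m, A.C a (k+m) = A.C a k := by
    intro a k h m
    induction m with
    | zero => rfl
    | succ n ih =>
        have e : k + (n+1) = (k+n) + 1 := rfl
        rw [e, hCcongr a _ _ ih, ← h]
  have hWne0 : ∀ k ≤ 3, W 0 (k+1) ≠ ⊥ := by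
    intro k hk hbot
    have h : A.C 0 k = A.C 0 (k+1) := by rw [hC 0 k, hbot, bot_sup_eq]
    have h3 : A.C 0 3 = A.C 0 k := by
      have := hstab 0 k h (3-k); rwa [Nat.add_sub_cancel' hk] at this
    have h4 : A.C 0 4 = A.C 0 k := by
      have := hstab 0 k h (4-k); rwa [Nat.add_sub_cancel' (hk.trans (by norm_num))] at this
    exact hC03 (by rw [h3, ← h4, hC04])
  have hWne1 : ∀ k ≤ 1, W 1 (k+1) ≠ ⊥ := by
    intro k hk hbot
    have h : A.C 1 k = A.C 1 (k+1) := by rw [hC 1 k, hbot, bot_sup_eq]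
    have h1 : A.C 1 1 = A.C 1 k := by
      have := hstab 1 k h (1-k); rwa [Nat.add_sub_cancel' hk] at this
    have h2 : A.C 1 2 = A.C 1 k := by
      have := hstab 1 k h (2-k); rwa [Nat.add_sub_cancel' (hk.trans (by norm_num))] at this
    exact hC11 (by rw [h1, ← h2, hC12])
  have hC0bot : ∀ m, A.C 0 (m+4) = ⊥ := by
    intro m
    induction m with
    | zero => exact hC04
    | succ n ih => exact hCbot 0 (n+4) ih
  have hC1bot : ∀ m, A.C 1 (m+2) = ⊥ := by
    intro m
    induction m with
    | zero => exact hC12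
    | succ n ih => exact hCbot 1 (n+2) ih
  have hW05 : ∀ m, W 0 (m+5) = ⊥ := fun m =>
    le_bot_iff.1 ((hWleC 0 (m+4)).trans_eq (hC0bot m))
  have hW13 : ∀ m, W 1 (m+3) = ⊥ := fun m =>
    le_bot_iff.1 ((hWleC 1 (m+2)).trans_eq (hC1bot m))
  -- finrank bookkeeping
  have hrank : ∀ a k, finrank ℂ (A.C a k) = finrank ℂ (W a (k+1)) + finrank ℂ (A.C a (k+1)) := by
    intro a k
    have h := Submodule.finrank_sup_add_finrank_inf_eq (W a (k+1)) (A.C a (k+1))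
    rw [hdisj, ← hC, finrank_bot, add_zero] at h
    exact h
  have hsum0 : finrank ℂ (W 0 1) + finrank ℂ (W 0 2) + finrank ℂ (W 0 3)
      + finrank ℂ (W 0 4) = 5 := by
    have h0 := hrank 0 0
    have h1 := hrank 0 1
    have h2 := hrank 0 2
    have h3 := hrank 0 3
    rw [hC04, finrank_bot] at h3
    have : A.C 0 0 = A.g 0 := rfl
    rw [this, hdim0] at h0
    simp only [Nat.reduceAdd] at h0 h1 h2 h3
    omega
  have hsum1 : finrank ℂ (W 1 1) + finrank ℂ (W 1 2) = 2 := by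
    have h0 := hrank 1 0
    have h1 := hrank 1 1
    rw [hC12, finrank_bot] at h1
    have : A.C 1 0 = A.g 1 := rfl
    rw [this, hdim1] at h0
    simp only [Nat.reduceAdd] at h0 h1
    omega
  have hfpos : ∀ a k, W a k ≠ ⊥ → 1 ≤ finrank ℂ (W a k) := by
    intro a k h
    have := (Submodule.finrank_eq_zero (S := W a k)).not.2 h
    omega

  -- sign and symmetry lemmas
  have hssign00 : ssign 0 0 = 1 := if_neg (by decide)
  have hssign10 : ssign 1 0 = 1 := if_neg (by decide)
  have hssign01 : ssign 0 1 = 1 := if_neg (by decide)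
  have hssign11 : ssign 1 1 = -1 := if_pos (by decide)
  have hself0 : ∀ x ∈ A.g 0, A.bk x x = 0 := by
    intro x hx
    have h := A.skew 0 0 x hx x hx
    rw [hssign00, one_smul] at h
    have h2 : (2:ℂ) • A.bk x x = 0 := by
      rw [two_smul]
      nth_rewrite 1 [h]
      abel
    exact (smul_eq_zero.1 h2).resolve_left two_ne_zero
  have hskew00 : ∀ x ∈ A.g 0, ∀ y ∈ A.g 0, A.bk x y = -A.bk y x := by
    intro x hx y hy
    have h := A.skew 0 0 x hx y hy
    rwa [hssign00, one_smul] at h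
  have hskew10 : ∀ x ∈ A.g 0, ∀ y ∈ A.g 1, A.bk y x = -A.bk x y := by
    intro x hx y hy
    have h := A.skew 1 0 y hy x hx
    rwa [hssign10, one_smul] at h
  have hsymm11 : ∀ x ∈ A.g 1, ∀ y ∈ A.g 1, A.bk x y = A.bk y x := by
    intro x hx y hy
    have h := A.skew 1 1 x hx y hy
    rw [hssign11] at h
    simpa using h
  -- decomposition of even elements
  have hdecomp0 : ∀ x ∈ A.g 0, ∃ x1 ∈ W 0 1, ∃ x2 ∈ W 0 2, ∃ x3 ∈ W 0 3, ∃ x4 ∈ W 0 4,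
      x = x1 + (x2 + (x3 + x4)) := by
    have e1 := hC 0 0; have e2 := hC 0 1; have e3 := hC 0 2; have e4 := hC 0 3
    simp only [Nat.reduceAdd] at e1 e2 e3 e4
    intro x hx
    have hx' : x ∈ A.C 0 0 := hx
    rw [e1, e2, e3, e4, hC04, sup_bot_eq] at hx'
    obtain ⟨x1, h1, y, hy, rfl⟩ := Submodule.mem_sup.1 hx'
    obtain ⟨x2, h2, z, hz, rfl⟩ := Submodule.mem_sup.1 hy
    obtain ⟨x3, h3, x4, h4, rfl⟩ := Submodule.mem_sup.1 hz
    exact ⟨x1, h1, x2, h2, x3, h3, x4, h4, rfl⟩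
  -- key inclusion, even part
  have hWB : ∀ k, W 0 (k+2) ≤
      Submodule.span ℂ {z | ∃ x ∈ W 0 1, ∃ y ∈ W 0 (k+1), z = A.bk x y} := by
    intro k
    set B := Submodule.span ℂ {z | ∃ x ∈ W 0 1, ∃ y ∈ W 0 (k+1), z = A.bk x y} with hB
    have hBle : B ≤ W 0 (k+2) := by
      rw [hB]
      apply Submodule.span_le.2
      rintro z ⟨x, hx, y, hy, rfl⟩
      have h := hWbk 0 0 1 (k+1) x hx y hy
      have e : (1:ℕ) + (k+1) = k+2 := by omega
      rw [e] at h
      exact h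
    have hmain : A.C 0 (k+1) ≤ B ⊔ A.C 0 (k+2) := by
      rw [hCsucc 0 k]
      apply Submodule.span_le.2
      rintro z ⟨x, hx, y, hy, rfl⟩
      obtain ⟨x1, h1, x2, h2, x3, h3, x4, h4, rfl⟩ := hdecomp0 x hx
      rw [hC 0 k] at hy
      obtain ⟨b, hb, c, hcm, rfl⟩ := Submodule.mem_sup.1 hy
      have expand : A.bk (x1 + (x2 + (x3 + x4))) (b + c)
          = A.bk x1 b + (A.bk x1 c + ((A.bk x2 b + (A.bk x3 b + A.bk x4 b))
            + A.bk (x2 + (x3 + x4)) c)) := by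
        simp only [map_add, LinearMap.add_apply]
        abel
      rw [expand]
      have m1 : A.bk x1 b ∈ B := Submodule.subset_span ⟨x1, h1, b, hb, rfl⟩
      have m2 : A.bk x1 c ∈ A.C 0 (k+2) := by
        rw [hCsucc 0 (k+1)]
        exact Submodule.subset_span ⟨x1, hWleG 0 1 h1, c, hcm, rfl⟩
      have m3 : A.bk x2 b ∈ A.C 0 (k+2) := by
        have h := hWbk 0 0 2 (k+1) x2 h2 b hb
        have e : (2:ℕ) + (k+1) = (k+2)+1 := by omega
        rw [e] at h
        exact hWleC 0 (k+2) h
      have m4 : A.bk x3 b ∈ A.C 0 (k+2) := by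
        have h := hWbk 0 0 3 (k+1) x3 h3 b hb
        have e : (3:ℕ) + (k+1) = (k+3)+1 := by omega
        rw [e] at h
        exact hCmono 0 (k+2) (hWleC 0 (k+3) h)
      have m5 : A.bk x4 b ∈ A.C 0 (k+2) := by
        have h := hWbk 0 0 4 (k+1) x4 h4 b hb
        have e : (4:ℕ) + (k+1) = (k+4)+1 := by omega
        rw [e] at h
        exact hCmono 0 (k+2) (hCmono 0 (k+3) (hWleC 0 (k+4) h))
      have m6 : A.bk (x2 + (x3 + x4)) c ∈ A.C 0 (k+2) := by
        rw [hCsucc 0 (k+1)]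
        refine Submodule.subset_span ⟨x2 + (x3 + x4), ?_, c, hcm, rfl⟩
        exact add_mem (hWleG 0 2 h2) (add_mem (hWleG 0 3 h3) (hWleG 0 4 h4))
      exact add_mem (Submodule.mem_sup_left m1)
        (Submodule.mem_sup_right (add_mem m2 (add_mem (add_mem m3 (add_mem m4 m5)) m6)))
    intro w hw
    have hw' : w ∈ B ⊔ A.C 0 (k+2) := hmain (hWleC 0 (k+1) hw)
    obtain ⟨bB, hbB, cC, hcC, rfl⟩ := Submodule.mem_sup.1 hw'
    have hcW : cC ∈ W 0 (k+2) ⊓ A.C 0 (k+2) := by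
      constructor
      · have : bB + cC - bB ∈ W 0 (k+2) := sub_mem hw (hBle hbB)
        simpa using this
      · exact hcC
    rw [hdisj 0 (k+1)] at hcW
    rw [Submodule.mem_bot] at hcW
    rw [hcW, add_zero]
    exact hbB
  -- odd part structure
  have hC11W : A.C 1 1 = W 1 2 := by
    have e := hC 1 1
    simp only [Nat.reduceAdd] at e
    rw [e, hC12, sup_bot_eq]
  have hg1dec : A.g 1 = W 1 1 ⊔ W 1 2 := by
    have e := hC 1 0
    simp only [Nat.reduceAdd, Nat.zero_add] at e
    rw [← hC11W]
    exact e
  have hW1z : ∀ i j : ℕ, i + j ≥ 3 → ∀ x ∈ W 0 i, ∀ y ∈ W 1 j, A.bk x y = 0 := by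
    intro i j hij x hx y hy
    have h : A.bk x y ∈ W 1 (i + j) := hWbk 0 1 i j x hx y hy
    have e : i + j = (i + j - 3) + 3 := by omega
    rw [e, hW13 (i + j - 3), Submodule.mem_bot] at h
    exact h
  have hWBodd : W 1 2 ≤
      Submodule.span ℂ {z | ∃ x ∈ W 0 1, ∃ y ∈ W 1 1, z = A.bk x y} := by
    rw [← hC11W, hCsucc 1 0]
    apply Submodule.span_le.2
    rintro z ⟨x, hx, y, hy, rfl⟩
    obtain ⟨x1, h1, x2, h2, x3, h3, x4, h4, rfl⟩ := hdecomp0 x hx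
    have hy' : y ∈ W 1 1 ⊔ W 1 2 := by rw [← hg1dec]; exact hy
    obtain ⟨b, hb, c, hcm, rfl⟩ := Submodule.mem_sup.1 hy'
    have expand : A.bk (x1 + (x2 + (x3 + x4))) (b + c)
        = A.bk x1 b + (A.bk x1 c + (A.bk x2 b + (A.bk x2 c + (A.bk x3 b + (A.bk x3 c
          + (A.bk x4 b + A.bk x4 c)))))) := by
      simp only [map_add, LinearMap.add_apply]
      abel
    rw [expand]
    have z1 : A.bk x1 c = 0 := hW1z 1 2 (by omega) x1 h1 c hcm
    have z2 : A.bk x2 b = 0 := hW1z 2 1 (by omega) x2 h2 b hb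
    have z3 : A.bk x2 c = 0 := hW1z 2 2 (by omega) x2 h2 c hcm
    have z4 : A.bk x3 b = 0 := hW1z 3 1 (by omega) x3 h3 b hb
    have z5 : A.bk x3 c = 0 := hW1z 3 2 (by omega) x3 h3 c hcm
    have z6 : A.bk x4 b = 0 := hW1z 4 1 (by omega) x4 h4 b hb
    have z7 : A.bk x4 c = 0 := hW1z 4 2 (by omega) x4 h4 c hcm
    rw [z1, z2, z3, z4, z5, z6, z7]
    simp only [add_zero, zero_add]
    exact Submodule.subset_span ⟨x1, h1, b, hb, rfl⟩
  -- explicit nonbottomness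
  have hW01ne : W 0 1 ≠ ⊥ := by have := hWne0 0 (by norm_num); simpa using this
  have hW02ne : W 0 2 ≠ ⊥ := by have := hWne0 1 (by norm_num); simpa using this
  have hW03ne : W 0 3 ≠ ⊥ := by have := hWne0 2 (by norm_num); simpa using this
  have hW04ne : W 0 4 ≠ ⊥ := by have := hWne0 3 (by norm_num); simpa using this
  have hW11ne : W 1 1 ≠ ⊥ := by have := hWne1 0 (by norm_num); simpa using this
  have hW12ne : W 1 2 ≠ ⊥ := by have := hWne1 1 (by norm_num); simpa using this
  -- dim W 0 1 ≥ 2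
  have hf1 : 2 ≤ finrank ℂ (W 0 1) := by
    by_contra hcon
    push_neg at hcon
    have h1 : finrank ℂ (W 0 1) = 1 := by
      have := hfpos 0 1 hW01ne; omega
    obtain ⟨v, hv, hv0⟩ := Submodule.exists_mem_ne_zero_of_ne_bot hW01ne
    have hsp : Submodule.span ℂ {v} = W 0 1 := span_single_of_finrank_one h1 hv hv0
    have hbot : W 0 2 ≤ ⊥ := by
      have h2 := hWB 0
      simp only [Nat.reduceAdd, Nat.zero_add] at h2
      refine h2.trans ?_
      apply Submodule.span_le.2
      rintro z ⟨x, hx, y, hy, rfl⟩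
      rw [← hsp, Submodule.mem_span_singleton] at hx hy
      obtain ⟨s, rfl⟩ := hx
      obtain ⟨t, rfl⟩ := hy
      simp only [map_smul, LinearMap.smul_apply, Submodule.mem_bot]
      rw [hself0 v (hWleG 0 1 hv)]
      simp
    exact hW02ne (le_bot_iff.1 hbot)
  have hf01 : finrank ℂ (W 0 1) = 2 := by
    have := hfpos 0 2 hW02ne; have := hfpos 0 3 hW03ne; have := hfpos 0 4 hW04ne; omega
  have hf02 : finrank ℂ (W 0 2) = 1 := by
    have := hfpos 0 2 hW02ne; have := hfpos 0 3 hW03ne; have := hfpos 0 4 hW04ne; omega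
  have hf03 : finrank ℂ (W 0 3) = 1 := by
    have := hfpos 0 2 hW02ne; have := hfpos 0 3 hW03ne; have := hfpos 0 4 hW04ne; omega
  have hf04 : finrank ℂ (W 0 4) = 1 := by
    have := hfpos 0 2 hW02ne; have := hfpos 0 3 hW03ne; have := hfpos 0 4 hW04ne; omega
  have hf11 : finrank ℂ (W 1 1) = 1 := by
    have := hfpos 1 1 hW11ne; have := hfpos 1 2 hW12ne; omega
  have hf12 : finrank ℂ (W 1 2) = 1 := by
    have := hfpos 1 1 hW11ne; have := hfpos 1 2 hW12ne; omega
  -- basis of W 0 1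
  have bU : Basis (Fin 2) ℂ (W 0 1) := Module.finBasisOfFinrankEq ℂ _ hf01
  set U : V := (bU 0 : V) with hUdef
  set Vv : V := (bU 1 : V) with hVdef
  have hUW : U ∈ W 0 1 := (bU 0).2
  have hVW : Vv ∈ W 0 1 := (bU 1).2
  have hspanUV : Submodule.span ℂ (Set.range fun i : Fin 2 => (bU i : V)) = W 0 1 :=
    span_coe_basis bU
  have hmemUV : ∀ x ∈ W 0 1, ∃ s t : ℂ, x = s • U + t • Vv := by
    intro x hx
    rw [← hspanUV, mem_span_range_iff_exists_fun] at hx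
    obtain ⟨c, hc⟩ := hx
    exact ⟨c 0, c 1, by rw [← hc, Fin.sum_univ_two]⟩
  obtain ⟨T, hTW, hT0⟩ := Submodule.exists_mem_ne_zero_of_ne_bot hW03ne
  have hspanT : Submodule.span ℂ {T} = W 0 3 := span_single_of_finrank_one hf03 hTW hT0
  obtain ⟨P, hPW, hP0⟩ := Submodule.exists_mem_ne_zero_of_ne_bot hW04ne
  have hspanP : Submodule.span ℂ {P} = W 0 4 := span_single_of_finrank_one hf04 hPW hP0
  obtain ⟨Y0, hY0W, hY00⟩ := Submodule.exists_mem_ne_zero_of_ne_bot hW11ne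
  have hspanY0 : Submodule.span ℂ {Y0} = W 1 1 := span_single_of_finrank_one hf11 hY0W hY00
  obtain ⟨Z, hZW, hZ0⟩ := Submodule.exists_mem_ne_zero_of_ne_bot hW12ne
  have hspanZ : Submodule.span ℂ {Z} = W 1 2 := span_single_of_finrank_one hf12 hZW hZ0
  -- S = [U,V] spans W 0 2
  set S : V := A.bk U Vv with hSdef
  have hSW : S ∈ W 0 2 := hWbk 0 0 1 1 U hUW Vv hVW
  have hUU : A.bk U U = 0 := hself0 U (hWleG 0 1 hUW)
  have hVV : A.bk Vv Vv = 0 := hself0 Vv (hWleG 0 1 hVW)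
  have hVU : A.bk Vv U = -S := by
    have h := hskew00 Vv (hWleG 0 1 hVW) U (hWleG 0 1 hUW)
    rw [h]
  have hW02S : W 0 2 ≤ Submodule.span ℂ {S} := by
    have h2 := hWB 0
    simp only [Nat.zero_add, Nat.reduceAdd] at h2
    refine h2.trans (Submodule.span_le.2 ?_)
    rintro z ⟨x, hx, y, hy, rfl⟩
    obtain ⟨s, t, rfl⟩ := hmemUV x hx
    obtain ⟨s', t', rfl⟩ := hmemUV y hy
    have e : A.bk (s • U + t • Vv) (s' • U + t' • Vv) = (s * t' - t * s') • S := by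
      simp only [map_add, map_smul, LinearMap.add_apply, LinearMap.smul_apply,
        hUU, hVV, hVU, smul_zero, add_zero, zero_add, smul_neg]
      rw [← hSdef]
      module
    rw [e]
    exact Submodule.mem_span_singleton.2 ⟨s * t' - t * s', rfl⟩
  have hS0 : S ≠ 0 := by
    intro h
    refine hW02ne (le_bot_iff.1 (hW02S.trans ?_))
    rw [h, Submodule.span_zero_singleton]
  have hspanS : Submodule.span ℂ {S} = W 0 2 :=
    le_antisymm ((Submodule.span_singleton_le_iff_mem _ _).2 hSW) hW02S
  -- coefficients
  have hUSW : A.bk U S ∈ W 0 3 := hWbk 0 0 1 2 U hUW S hSW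
  have hVSW : A.bk Vv S ∈ W 0 3 := hWbk 0 0 1 2 Vv hVW S hSW
  rw [← hspanT] at hUSW hVSW
  obtain ⟨u1, hu1⟩ := Submodule.mem_span_singleton.1 hUSW
  obtain ⟨u2, hu2⟩ := Submodule.mem_span_singleton.1 hVSW
  have hUTW : A.bk U T ∈ W 0 4 := hWbk 0 0 1 3 U hUW T hTW
  have hVTW : A.bk Vv T ∈ W 0 4 := hWbk 0 0 1 3 Vv hVW T hTW
  rw [← hspanP] at hUTW hVTW
  obtain ⟨w1, hw1⟩ := Submodule.mem_span_singleton.1 hUTW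
  obtain ⟨w2, hw2⟩ := Submodule.mem_span_singleton.1 hVTW
  have hu : ¬(u1 = 0 ∧ u2 = 0) := by
    rintro ⟨e1, e2⟩
    refine hW03ne (le_bot_iff.1 ?_)
    have h3 := hWB 1
    simp only [Nat.reduceAdd] at h3
    refine h3.trans (Submodule.span_le.2 ?_)
    rintro z ⟨x, hx, y, hy, rfl⟩
    obtain ⟨s, t, rfl⟩ := hmemUV x hx
    rw [← hspanS] at hy
    obtain ⟨cc, rfl⟩ := Submodule.mem_span_singleton.1 hy
    simp only [map_add, map_smul, LinearMap.add_apply, LinearMap.smul_apply, Submodule.mem_bot]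
    rw [← hu1, ← hu2, e1, e2]
    simp
  have hw : ¬(w1 = 0 ∧ w2 = 0) := by
    rintro ⟨e1, e2⟩
    refine hW04ne (le_bot_iff.1 ?_)
    have h4 := hWB 2
    simp only [Nat.reduceAdd] at h4
    refine h4.trans (Submodule.span_le.2 ?_)
    rintro z ⟨x, hx, y, hy, rfl⟩
    obtain ⟨s, t, rfl⟩ := hmemUV x hx
    rw [← hspanT] at hy
    obtain ⟨cc, rfl⟩ := Submodule.mem_span_singleton.1 hy
    simp only [map_add, map_smul, LinearMap.add_apply, LinearMap.smul_apply, Submodule.mem_bot]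
    rw [← hw1, ← hw2, e1, e2]
    simp
  obtain ⟨a, b, hab1, hab2⟩ := exists_good_pair hu hw
  set X0 : V := a • U + b • Vv with hX0def
  have hX0W : X0 ∈ W 0 1 := add_mem (Submodule.smul_mem _ _ hUW) (Submodule.smul_mem _ _ hVW)
  have hX0g : X0 ∈ A.g 0 := hWleG 0 1 hX0W
  have hX0S : A.bk X0 S = (a * u1 + b * u2) • T := by
    rw [hX0def]
    simp only [map_add, map_smul, LinearMap.add_apply, LinearMap.smul_apply]
    rw [← hu1, ← hu2, smul_smul, smul_smul, ← add_smul]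
  have hX0T : A.bk X0 T = (a * w1 + b * w2) • P := by
    rw [hX0def]
    simp only [map_add, map_smul, LinearMap.add_apply, LinearMap.smul_apply]
    rw [← hw1, ← hw2, smul_smul, smul_smul, ← add_smul]
  have hX0Sne : A.bk X0 S ≠ 0 := by
    rw [hX0S]; exact smul_ne_zero hab1 hT0
  have hX0ne : X0 ≠ 0 := by
    intro h
    apply hX0Sne
    rw [h]
    simp
  have hX1ex : ∃ y ∈ W 0 1, A.bk X0 y = S := by
    by_cases ha : a = 0
    · have hb : b ≠ 0 := by
        intro hb
        rw [ha, hb] at hab1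
        simp at hab1
      refine ⟨(-(b⁻¹)) • U, Submodule.smul_mem _ _ hUW, ?_⟩
      rw [hX0def, ha]
      simp only [zero_smul, zero_add, map_add, map_smul, LinearMap.add_apply,
        LinearMap.smul_apply]
      rw [hVU, smul_smul, smul_neg]
      rw [show -b⁻¹ * b = (-1 : ℂ) by field_simp]
      simp
    · refine ⟨a⁻¹ • Vv, Submodule.smul_mem _ _ hVW, ?_⟩
      rw [hX0def]
      simp only [map_add, map_smul, LinearMap.add_apply, LinearMap.smul_apply]
      rw [hVV, smul_zero, add_zero, ← hSdef, smul_smul,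
        show a⁻¹ * a = (1:ℂ) from inv_mul_cancel₀ ha, one_smul]
  obtain ⟨X1, hX1W, hX1S⟩ := hX1ex
  -- X3, X4
  set X3 : V := A.bk X0 S with hX3def
  have hX3W : X3 ∈ W 0 3 := hWbk 0 0 1 2 X0 hX0W S hSW
  have hX3ne : X3 ≠ 0 := hX0Sne
  have hspanX3 : Submodule.span ℂ {X3} = W 0 3 := span_single_of_finrank_one hf03 hX3W hX3ne
  have hX3T : X3 ∈ Submodule.span ℂ {T} := by rw [hspanT]; exact hX3W
  obtain ⟨μ, hμ⟩ := Submodule.mem_span_singleton.1 hX3T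
  have hμ0 : μ ≠ 0 := by
    intro h
    rw [h, zero_smul] at hμ
    exact hX3ne hμ.symm
  set X4 : V := A.bk X0 X3 with hX4def
  have hX4W : X4 ∈ W 0 4 := hWbk 0 0 1 3 X0 hX0W X3 hX3W
  have hX4eq : X4 = (μ * (a * w1 + b * w2)) • P := by
    rw [hX4def, ← hμ, map_smul, hX0T, smul_smul]
  have hX4ne : X4 ≠ 0 := by
    rw [hX4eq]; exact smul_ne_zero (mul_ne_zero hμ0 hab2) hP0
  have hspanX4 : Submodule.span ℂ {X4} = W 0 4 := span_single_of_finrank_one hf04 hX4W hX4ne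
  have hW05' : W 0 5 = ⊥ := by have := hW05 0; simpa using this
  have hX0X4 : A.bk X0 X4 = 0 := by
    have h : A.bk X0 X4 ∈ W 0 5 := hWbk 0 0 1 4 X0 hX0W X4 hX4W
    rw [hW05', Submodule.mem_bot] at h
    exact h
  have hzero0 : ∀ i j : ℕ, i + j ≥ 5 → ∀ x ∈ W 0 i, ∀ y ∈ W 0 j, A.bk x y = 0 := by
    intro i j hij x hx y hy
    have h : A.bk x y ∈ W 0 (i + j) := hWbk 0 0 i j x hx y hy
    have e : i + j = (i + j - 5) + 5 := by omega
    rw [e, hW05 (i + j - 5), Submodule.mem_bot] at h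
    exact h
  -- coefficients c, d and the Jacobi identity making them equal
  have hX1g : X1 ∈ A.g 0 := hWleG 0 1 hX1W
  have hSg : S ∈ A.g 0 := hWleG 0 2 hSW
  have hX3g : X3 ∈ A.g 0 := hWleG 0 3 hX3W
  have hX4g : X4 ∈ A.g 0 := hWleG 0 4 hX4W
  have hSS : A.bk S S = 0 := hself0 S hSg
  have hX1S2 : A.bk X1 S ∈ Submodule.span ℂ {X3} := by
    rw [hspanX3]; exact hWbk 0 0 1 2 X1 hX1W S hSW
  obtain ⟨c, hc⟩ := Submodule.mem_span_singleton.1 hX1S2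
  have hX1X3 : A.bk X1 X3 ∈ Submodule.span ℂ {X4} := by
    rw [hspanX4]; exact hWbk 0 0 1 3 X1 hX1W X3 hX3W
  obtain ⟨d, hd⟩ := Submodule.mem_span_singleton.1 hX1X3
  have hSX0 : A.bk S X0 = -X3 := by
    rw [hskew00 S hSg X0 hX0g, ← hX3def]
  have hcd : c = d := by
    have hJ := A.jacobi 0 0 0 X0 hX0g X1 hX1g S hSg
    rw [hssign00] at hJ
    simp only [one_smul] at hJ
    have e1 : A.bk X0 (A.bk X1 S) = c • X4 := by
      rw [← hc, map_smul, ← hX4def]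
    have e2 : A.bk X1 (A.bk S X0) = -(d • X4) := by
      rw [hSX0, map_neg, ← hd]
    have e3 : A.bk S (A.bk X0 X1) = 0 := by
      rw [hX1S, hSS]
    rw [e1, e2, e3, add_zero] at hJ
    have h : (c - d) • X4 = 0 := by
      rw [← hJ]
      module
    exact sub_eq_zero.1 ((smul_eq_zero.1 h).resolve_right hX4ne)
  -- the corrected X1'
  set X1' : V := X1 - c • X0 with hX1'def
  have hX1'W : X1' ∈ W 0 1 := sub_mem hX1W (Submodule.smul_mem _ _ hX0W)
  have hX1'g : X1' ∈ A.g 0 := hWleG 0 1 hX1'W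
  have hX0X0 : A.bk X0 X0 = 0 := hself0 X0 hX0g
  have h01' : A.bk X0 X1' = S := by
    rw [hX1'def, map_sub, map_smul, hX1S, hX0X0, smul_zero, sub_zero]
  have h1'S : A.bk X1' S = 0 := by
    rw [hX1'def]
    simp only [map_sub, map_smul, LinearMap.sub_apply, LinearMap.smul_apply]
    rw [← hc, ← hX3def, sub_self]
  have h1'3 : A.bk X1' X3 = 0 := by
    rw [hX1'def]
    simp only [map_sub, map_smul, LinearMap.sub_apply, LinearMap.smul_apply]
    rw [← hd, ← hX4def, hcd, sub_self]
  have h1'1' : A.bk X1' X1' = 0 := hself0 X1' hX1'g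
  have h1'4 : A.bk X1' X4 = 0 := by
    have h : A.bk X1' X4 ∈ W 0 5 := hWbk 0 0 1 4 X1' hX1'W X4 hX4W
    rw [hW05', Submodule.mem_bot] at h
    exact h
  have hX1'ne : X1' ≠ 0 := by
    intro h
    apply hS0
    rw [← h01', h, map_zero]
  -- X0, X1' is a basis of W 0 1
  have hindpair : LinearIndependent ℂ ![X0, X1'] := by
    rw [linearIndependent_fin2]
    constructor
    · simpa using hX1'ne
    · intro t h
      simp only [Matrix.cons_val_one, Matrix.head_cons, Matrix.cons_val_zero] at h
      have h2 := congrArg (A.bk X0) h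
      rw [map_smul, h01', hX0X0] at h2
      rcases smul_eq_zero.1 h2 with h3 | h3
      · rw [h3, zero_smul] at h
        exact hX0ne h.symm
      · exact hS0 h3
  have hspan01 : Submodule.span ℂ (Set.range ![X0, X1']) = W 0 1 := by
    apply Submodule.eq_of_le_of_finrank_le
    · apply Submodule.span_le.2
      rintro z ⟨i, rfl⟩
      fin_cases i
      · simpa using hX0W
      · simpa using hX1'W
    · rw [hf01, finrank_span_eq_card hindpair]
      simp
  have hmem01 : ∀ x ∈ W 0 1, ∃ s t : ℂ, x = s • X0 + t • X1' := by
    intro x hx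
    rw [← hspan01, mem_span_range_iff_exists_fun] at hx
    obtain ⟨cf, hcf⟩ := hx
    refine ⟨cf 0, cf 1, ?_⟩
    rw [← hcf, Fin.sum_univ_two]
    simp
  -- odd coefficients
  have hY0g : Y0 ∈ A.g 1 := hWleG 1 1 hY0W
  have hZg : Z ∈ A.g 1 := hWleG 1 2 hZW
  have hX0Y0 : A.bk X0 Y0 ∈ Submodule.span ℂ {Z} := by
    rw [hspanZ]; exact hWbk 0 1 1 1 X0 hX0W Y0 hY0W
  obtain ⟨α, hα⟩ := Submodule.mem_span_singleton.1 hX0Y0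
  have hX1'Y0 : A.bk X1' Y0 ∈ Submodule.span ℂ {Z} := by
    rw [hspanZ]; exact hWbk 0 1 1 1 X1' hX1'W Y0 hY0W
  obtain ⟨β, hβ⟩ := Submodule.mem_span_singleton.1 hX1'Y0
  have hX0Z : A.bk X0 Z = 0 := hW1z 1 2 (by omega) X0 hX0W Z hZW
  have hX1'Z : A.bk X1' Z = 0 := hW1z 1 2 (by omega) X1' hX1'W Z hZW
  have hY0Y0 : A.bk Y0 Y0 ∈ Submodule.span ℂ {S} := by
    rw [hspanS]; exact hWbk 1 1 1 1 Y0 hY0W Y0 hY0W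
  obtain ⟨p, hp⟩ := Submodule.mem_span_singleton.1 hY0Y0
  have hY0Z : A.bk Y0 Z ∈ Submodule.span ℂ {X3} := by
    rw [hspanX3]; exact hWbk 1 1 1 2 Y0 hY0W Z hZW
  obtain ⟨q, hq⟩ := Submodule.mem_span_singleton.1 hY0Z
  have hZZ : A.bk Z Z ∈ Submodule.span ℂ {X4} := by
    rw [hspanX4]; exact hWbk 1 1 2 2 Z hZW Z hZW
  obtain ⟨r, hr⟩ := Submodule.mem_span_singleton.1 hZZ
  -- (α, β) ≠ (0,0)
  have hαβ : ¬(α = 0 ∧ β = 0) := by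
    rintro ⟨e1, e2⟩
    refine hW12ne (le_bot_iff.1 (hWBodd.trans (Submodule.span_le.2 ?_)))
    rintro z ⟨x, hx, y, hy, rfl⟩
    obtain ⟨s, t, rfl⟩ := hmem01 x hx
    rw [← hspanY0] at hy
    obtain ⟨e, rfl⟩ := Submodule.mem_span_singleton.1 hy
    simp only [map_add, map_smul, LinearMap.add_apply, LinearMap.smul_apply, Submodule.mem_bot]
    rw [← hα, ← hβ, e1, e2]
    simp
  -- Jacobi relations for the odd part
  have eYX0 : A.bk Y0 X0 = -A.bk X0 Y0 := hskew10 X0 hX0g Y0 hY0g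
  have eYX1' : A.bk Y0 X1' = -A.bk X1' Y0 := hskew10 X1' hX1'g Y0 hY0g
  have eZX0 : A.bk Z X0 = -A.bk X0 Z := hskew10 X0 hX0g Z hZg
  have eZX1' : A.bk Z X1' = -A.bk X1' Z := hskew10 X1' hX1'g Z hZg
  have hpeq : p = 2 * (α * q) := by
    have hJ := A.jacobi 0 1 1 X0 hX0g Y0 hY0g Y0 hY0g
    rw [hssign10, hssign01, hssign11] at hJ
    simp only [one_smul, neg_one_smul] at hJ
    rw [eYX0, ← hα, ← hp] at hJ
    simp only [map_neg, map_smul] at hJ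
    rw [← hq, ← hX3def] at hJ
    have h : (p - 2 * (α * q)) • X3 = 0 := by
      rw [← hJ]
      module
    exact sub_eq_zero.1 ((smul_eq_zero.1 h).resolve_right hX3ne)
  have hqeq : q = α * r := by
    have hJ := A.jacobi 0 1 1 X0 hX0g Y0 hY0g Z hZg
    rw [hssign10, hssign01, hssign11] at hJ
    simp only [one_smul, neg_one_smul] at hJ
    rw [eZX0, hX0Z, neg_zero, map_zero, ← hα, ← hq] at hJ
    simp only [map_smul] at hJ
    rw [← hr, ← hX4def] at hJ
    have h : (q - α * r) • X4 = 0 := by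
      rw [← hJ]
      module
    exact sub_eq_zero.1 ((smul_eq_zero.1 h).resolve_right hX4ne)
  have hβq : β * q = 0 := by
    have hJ := A.jacobi 0 1 1 X1' hX1'g Y0 hY0g Y0 hY0g
    rw [hssign10, hssign01, hssign11] at hJ
    simp only [one_smul, neg_one_smul] at hJ
    rw [eYX1', ← hβ, ← hp] at hJ
    simp only [map_neg, map_smul] at hJ
    rw [← hq, h1'S] at hJ
    have h : ((-2) * (β * q)) • X3 = 0 := by
      rw [← hJ]
      module
    have h2 := (smul_eq_zero.1 h).resolve_right hX3ne
    linear_combination (-1/2 : ℂ) * h2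
  have hβr : β * r = 0 := by
    have hJ := A.jacobi 0 1 1 X1' hX1'g Y0 hY0g Z hZg
    rw [hssign10, hssign01, hssign11] at hJ
    simp only [one_smul, neg_one_smul] at hJ
    rw [eZX1', hX1'Z, neg_zero, map_zero, ← hβ, ← hq] at hJ
    simp only [map_smul] at hJ
    rw [h1'3, ← hr] at hJ
    have h : (-(β * r)) • X4 = 0 := by
      rw [← hJ]
      module
    have h2 := (smul_eq_zero.1 h).resolve_right hX4ne
    linear_combination (-1 : ℂ) * h2
  -- nondegeneracy gives (p,q,r) ≠ 0
  have hdec1 : ∀ v ∈ A.g 1, ∃ s t : ℂ, v = s • Y0 + t • Z := by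
    intro v hv
    rw [hg1dec] at hv
    obtain ⟨bb, hbb, cc, hcc, rfl⟩ := Submodule.mem_sup.1 hv
    rw [← hspanY0] at hbb
    rw [← hspanZ] at hcc
    obtain ⟨s, rfl⟩ := Submodule.mem_span_singleton.1 hbb
    obtain ⟨t, rfl⟩ := Submodule.mem_span_singleton.1 hcc
    exact ⟨s, t, rfl⟩
  have hZY0 : A.bk Z Y0 = A.bk Y0 Z := hsymm11 Z hZg Y0 hY0g
  have hpqr : ¬(p = 0 ∧ q = 0 ∧ r = 0) := by
    rintro ⟨e1, e2, e3⟩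
    obtain ⟨xx, hxx, yy, hyy, hne⟩ := hnd
    apply hne
    obtain ⟨s, t, rfl⟩ := hdec1 xx hxx
    obtain ⟨s', t', rfl⟩ := hdec1 yy hyy
    simp only [map_add, map_smul, LinearMap.add_apply, LinearMap.smul_apply]
    rw [hZY0, ← hp, ← hq, ← hr, e1, e2, e3]
    simp
  have hrne : r ≠ 0 := by
    intro h
    have hq0 : q = 0 := by rw [hqeq, h, mul_zero]
    exact hpqr ⟨by rw [hpeq, hq0]; ring, hq0, h⟩
  have hβ0 : β = 0 := by
    rcases mul_eq_zero.1 hβr with h | h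
    · exact h
    · exact absurd h hrne
  have hαne : α ≠ 0 := fun h => hαβ ⟨h, hβ0⟩
  have hqne : q ≠ 0 := by rw [hqeq]; exact mul_ne_zero hαne hrne
  have hαq : α * q ≠ 0 := mul_ne_zero hαne hqne
  -- normalization
  obtain ⟨l, hl⟩ := IsAlgClosed.exists_pow_nat_eq ((α * q)⁻¹ : ℂ) (by norm_num : 0 < 2)
  have hl0 : l ≠ 0 := by
    intro h
    rw [h, zero_pow (by norm_num : (2:ℕ) ≠ 0)] at hl
    exact hαq (inv_eq_zero.1 hl.symm)
  have hs1 : l ^ 2 * (α * q) = 1 := by rw [hl]; exact inv_mul_cancel₀ hαq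
  set Y1 : V := l • Y0 with hY1def
  set Y2 : V := (l * α) • Z with hY2def
  have hY1W : Y1 ∈ W 1 1 := Submodule.smul_mem _ _ hY0W
  have hY2W : Y2 ∈ W 1 2 := Submodule.smul_mem _ _ hZW
  have hY1g : Y1 ∈ A.g 1 := hWleG 1 1 hY1W
  have hY2g : Y2 ∈ A.g 1 := hWleG 1 2 hY2W
  have hY1ne : Y1 ≠ 0 := smul_ne_zero hl0 hY00
  have hY2ne : Y2 ≠ 0 := smul_ne_zero (mul_ne_zero hl0 hαne) hZ0
  have hspanY1 : Submodule.span ℂ {Y1} = W 1 1 := span_single_of_finrank_one hf11 hY1W hY1ne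
  have hspanY2 : Submodule.span ℂ {Y2} = W 1 2 := span_single_of_finrank_one hf12 hY2W hY2ne
  -- final bracket table
  have hX0Y1 : A.bk X0 Y1 = Y2 := by
    rw [hY1def, map_smul, ← hα, hY2def, smul_smul]
  have hX0Y2 : A.bk X0 Y2 = 0 := by rw [hY2def, map_smul, hX0Z, smul_zero]
  have hX1'Y1 : A.bk X1' Y1 = 0 := by
    rw [hY1def, map_smul, ← hβ, hβ0, zero_smul, smul_zero]
  have hX1'Y2 : A.bk X1' Y2 = 0 := by rw [hY2def, map_smul, hX1'Z, smul_zero]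
  have hY1Y1 : A.bk Y1 Y1 = (2:ℂ) • S := by
    rw [hY1def]
    simp only [map_smul, LinearMap.smul_apply]
    rw [← hp, smul_smul, smul_smul]
    congr 1
    rw [hpeq]
    linear_combination (2:ℂ) * hs1
  have hY1Y2 : A.bk Y1 Y2 = X3 := by
    rw [hY1def, hY2def]
    simp only [map_smul, LinearMap.smul_apply]
    rw [← hq, smul_smul, smul_smul]
    rw [show (l * α * l * q : ℂ) = 1 by linear_combination hs1, one_smul]
  have hY2Y1 : A.bk Y2 Y1 = X3 := by
    rw [← hY1Y2]
    exact hsymm11 Y2 hY2g Y1 hY1g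
  have hY2Y2 : A.bk Y2 Y2 = X4 := by
    rw [hY2def]
    simp only [map_smul, LinearMap.smul_apply]
    rw [← hr, smul_smul, smul_smul]
    rw [show (l * α * (l * α) * r : ℂ) = 1 by linear_combination hs1 - l^2*α*hqeq, one_smul]
  -- remaining even-odd zero brackets
  have hSY0z : A.bk S Y0 = 0 := hW1z 2 1 (by omega) S hSW Y0 hY0W
  have hSZz : A.bk S Z = 0 := hW1z 2 2 (by omega) S hSW Z hZW
  have h3Y0z : A.bk X3 Y0 = 0 := hW1z 3 1 (by omega) X3 hX3W Y0 hY0W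
  have h3Zz : A.bk X3 Z = 0 := hW1z 3 2 (by omega) X3 hX3W Z hZW
  have h4Y0z : A.bk X4 Y0 = 0 := hW1z 4 1 (by omega) X4 hX4W Y0 hY0W
  have h4Zz : A.bk X4 Z = 0 := hW1z 4 2 (by omega) X4 hX4W Z hZW
  have hSY1 : A.bk S Y1 = 0 := by rw [hY1def, map_smul, hSY0z, smul_zero]
  have hSY2 : A.bk S Y2 = 0 := by rw [hY2def, map_smul, hSZz, smul_zero]
  have h3Y1 : A.bk X3 Y1 = 0 := by rw [hY1def, map_smul, h3Y0z, smul_zero]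
  have h3Y2 : A.bk X3 Y2 = 0 := by rw [hY2def, map_smul, h3Zz, smul_zero]
  have h4Y1 : A.bk X4 Y1 = 0 := by rw [hY1def, map_smul, h4Y0z, smul_zero]
  have h4Y2 : A.bk X4 Y2 = 0 := by rw [hY2def, map_smul, h4Zz, smul_zero]
  -- reversed even brackets
  have h1'0 : A.bk X1' X0 = -S := by rw [hskew00 X1' hX1'g X0 hX0g, h01']
  have hSX1' : A.bk S X1' = 0 := by rw [hskew00 S hSg X1' hX1'g, h1'S, neg_zero]
  have h3X0 : A.bk X3 X0 = -X4 := by rw [hskew00 X3 hX3g X0 hX0g, ← hX4def]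
  have h3X1' : A.bk X3 X1' = 0 := by rw [hskew00 X3 hX3g X1' hX1'g, h1'3, neg_zero]
  have h4X0 : A.bk X4 X0 = 0 := by rw [hskew00 X4 hX4g X0 hX0g, hX0X4, neg_zero]
  have h4X1' : A.bk X4 X1' = 0 := by rw [hskew00 X4 hX4g X1' hX1'g, h1'4, neg_zero]
  -- remaining zero brackets among the high-degree even generators
  have hS3 : A.bk S X3 = 0 := hzero0 2 3 (by omega) S hSW X3 hX3W
  have hS4 : A.bk S X4 = 0 := hzero0 2 4 (by omega) S hSW X4 hX4W
  have h3S : A.bk X3 S = 0 := hzero0 3 2 (by omega) X3 hX3W S hSW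
  have h33 : A.bk X3 X3 = 0 := hself0 X3 hX3g
  have h34 : A.bk X3 X4 = 0 := hzero0 3 4 (by omega) X3 hX3W X4 hX4W
  have h4S : A.bk X4 S = 0 := hzero0 4 2 (by omega) X4 hX4W S hSW
  have h43 : A.bk X4 X3 = 0 := hzero0 4 3 (by omega) X4 hX4W X3 hX3W
  have h44 : A.bk X4 X4 = 0 := hself0 X4 hX4g
  have hfinV : finrank ℂ V = 7 := by
    rw [← Submodule.finrank_add_eq_of_isCompl A.compl, hdim0, hdim1]
  obtain ⟨Xf, hXf0, hXf1, hXf2, hXf3, hXf4⟩ :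
      ∃ f : ℕ → V, f 0 = X0 ∧ f 1 = X1' ∧ f 2 = S ∧ f 3 = X3 ∧ f 4 = X4 :=
    ⟨fun n => if n = 0 then X0 else if n = 1 then X1' else if n = 2 then S
      else if n = 3 then X3 else X4, by norm_num, by norm_num, by norm_num, by norm_num,
      by norm_num⟩
  obtain ⟨Yf, hYf1, hYf2⟩ : ∃ f : ℕ → V, f 1 = Y1 ∧ f 2 = Y2 :=
    ⟨fun n => if n = 1 then Y1 else Y2, by norm_num, by norm_num⟩
  have hmF0 : X0 ∈ Submodule.span ℂ
      (Set.range (Sum.elim (fun i : Fin 5 => Xf i.val) (fun j : Fin 2 => Yf (j.val + 1)))) :=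
    Submodule.subset_span ⟨Sum.inl 0, by simp [hXf0]⟩
  have hmF1 : X1' ∈ Submodule.span ℂ
      (Set.range (Sum.elim (fun i : Fin 5 => Xf i.val) (fun j : Fin 2 => Yf (j.val + 1)))) :=
    Submodule.subset_span ⟨Sum.inl 1, by simp [hXf1]⟩
  have hmF2 : S ∈ Submodule.span ℂ
      (Set.range (Sum.elim (fun i : Fin 5 => Xf i.val) (fun j : Fin 2 => Yf (j.val + 1)))) :=
    Submodule.subset_span ⟨Sum.inl 2, by simp [hXf2]⟩
  have hmF3 : X3 ∈ Submodule.span ℂ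
      (Set.range (Sum.elim (fun i : Fin 5 => Xf i.val) (fun j : Fin 2 => Yf (j.val + 1)))) :=
    Submodule.subset_span ⟨Sum.inl ⟨3, by norm_num⟩, hXf3⟩
  have hmF4 : X4 ∈ Submodule.span ℂ
      (Set.range (Sum.elim (fun i : Fin 5 => Xf i.val) (fun j : Fin 2 => Yf (j.val + 1)))) :=
    Submodule.subset_span ⟨Sum.inl ⟨4, by norm_num⟩, hXf4⟩
  have hmG1 : Y1 ∈ Submodule.span ℂ
      (Set.range (Sum.elim (fun i : Fin 5 => Xf i.val) (fun j : Fin 2 => Yf (j.val + 1)))) :=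
    Submodule.subset_span ⟨Sum.inr 0, by simp [hYf1]⟩
  have hmG2 : Y2 ∈ Submodule.span ℂ
      (Set.range (Sum.elim (fun i : Fin 5 => Xf i.val) (fun j : Fin 2 => Yf (j.val + 1)))) :=
    Submodule.subset_span ⟨Sum.inr 1, by simp [hYf2]⟩
  have hstop : (⊤ : Submodule ℂ V) ≤ Submodule.span ℂ
      (Set.range (Sum.elim (fun i : Fin 5 => Xf i.val) (fun j : Fin 2 => Yf (j.val + 1)))) := by
    rw [← A.compl.sup_eq_top]
    apply sup_le
    · intro v hv
      obtain ⟨x1, h1, x2, h2, x3, h3, x4, h4, rfl⟩ := hdecomp0 v hv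
      have m1 : x1 ∈ Submodule.span ℂ
          (Set.range (Sum.elim (fun i : Fin 5 => Xf i.val) (fun j : Fin 2 => Yf (j.val + 1)))) := by
        have h1' : x1 ∈ Submodule.span ℂ (Set.range ![X0, X1']) := by rw [hspan01]; exact h1
        refine Submodule.span_le.2 ?_ h1'
        rintro z ⟨i, rfl⟩
        fin_cases i
        · simpa using hmF0
        · simpa using hmF1
      have m2 : x2 ∈ Submodule.span ℂ
          (Set.range (Sum.elim (fun i : Fin 5 => Xf i.val) (fun j : Fin 2 => Yf (j.val + 1)))) := by
        have h2' : x2 ∈ Submodule.span ℂ {S} := by rw [hspanS]; exact h2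
        obtain ⟨cc, rfl⟩ := Submodule.mem_span_singleton.1 h2'
        exact Submodule.smul_mem _ _ hmF2
      have m3 : x3 ∈ Submodule.span ℂ
          (Set.range (Sum.elim (fun i : Fin 5 => Xf i.val) (fun j : Fin 2 => Yf (j.val + 1)))) := by
        have h3' : x3 ∈ Submodule.span ℂ {X3} := by rw [hspanX3]; exact h3
        obtain ⟨cc, rfl⟩ := Submodule.mem_span_singleton.1 h3'
        exact Submodule.smul_mem _ _ hmF3
      have m4 : x4 ∈ Submodule.span ℂ
          (Set.range (Sum.elim (fun i : Fin 5 => Xf i.val) (fun j : Fin 2 => Yf (j.val + 1)))) := by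
        have h4' : x4 ∈ Submodule.span ℂ {X4} := by rw [hspanX4]; exact h4
        obtain ⟨cc, rfl⟩ := Submodule.mem_span_singleton.1 h4'
        exact Submodule.smul_mem _ _ hmF4
      exact add_mem m1 (add_mem m2 (add_mem m3 m4))
    · intro v hv
      rw [hg1dec] at hv
      obtain ⟨bb, hbb, cc, hcc, rfl⟩ := Submodule.mem_sup.1 hv
      have m1 : bb ∈ Submodule.span ℂ
          (Set.range (Sum.elim (fun i : Fin 5 => Xf i.val) (fun j : Fin 2 => Yf (j.val + 1)))) := by
        have hb' : bb ∈ Submodule.span ℂ {Y1} := by rw [hspanY1]; exact hbb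
        obtain ⟨e, rfl⟩ := Submodule.mem_span_singleton.1 hb'
        exact Submodule.smul_mem _ _ hmG1
      have m2 : cc ∈ Submodule.span ℂ
          (Set.range (Sum.elim (fun i : Fin 5 => Xf i.val) (fun j : Fin 2 => Yf (j.val + 1)))) := by
        have hc' : cc ∈ Submodule.span ℂ {Y2} := by rw [hspanY2]; exact hcc
        obtain ⟨e, rfl⟩ := Submodule.mem_span_singleton.1 hc'
        exact Submodule.smul_mem _ _ hmG2
      exact add_mem m1 m2
  refine ⟨Xf, Yf, ⟨?_, ?_, ?_, ?_⟩, ?_, ?_, ?_⟩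
  · intro i hi
    interval_cases i
    · rw [hXf0]; exact hX0g
    · rw [hXf1]; exact hX1'g
    · rw [hXf2]; exact hSg
    · rw [hXf3]; exact hX3g
    · rw [hXf4]; exact hX4g
  · intro j hj1 hj2
    interval_cases j
    · rw [hYf1]; exact hY1g
    · rw [hYf2]; exact hY2g
  · exact linearIndependent_of_top_le_span_of_card_eq_finrank hstop (by simp [hfinV])
  · exact eq_top_iff.2 hstop
  · intro i j hi hj
    interval_cases i <;> interval_cases j
    · norm_num [hXf0]; exact hX0X0
    · norm_num [hXf0, hXf1, hXf2]; exact h01'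
    · norm_num [hXf0, hXf2, hXf3]; exact hX3def.symm
    · norm_num [hXf0, hXf3, hXf4]; exact hX4def.symm
    · norm_num [hXf0, hXf4]; exact hX0X4
    · norm_num [hXf0, hXf1, hXf2]; exact h1'0
    · norm_num [hXf1]; exact h1'1'
    · norm_num [hXf1, hXf2]; exact h1'S
    · norm_num [hXf1, hXf3]; exact h1'3
    · norm_num [hXf1, hXf4]; exact h1'4
    · norm_num [hXf0, hXf2, hXf3]; exact hSX0
    · norm_num [hXf1, hXf2]; exact hSX1'
    · norm_num [hXf2]; exact hSS
    · norm_num [hXf2, hXf3]; exact hS3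
    · norm_num [hXf2, hXf4]; exact hS4
    · norm_num [hXf0, hXf3, hXf4]; exact h3X0
    · norm_num [hXf1, hXf3]; exact h3X1'
    · norm_num [hXf2, hXf3]; exact h3S
    · norm_num [hXf3]; exact h33
    · norm_num [hXf3, hXf4]; exact h34
    · norm_num [hXf0, hXf4]; exact h4X0
    · norm_num [hXf1, hXf4]; exact h4X1'
    · norm_num [hXf2, hXf4]; exact h4S
    · norm_num [hXf3, hXf4]; exact h43
    · norm_num [hXf4]; exact h44
  · intro i j hi hj1 hj2
    interval_cases i <;> interval_cases j
    · norm_num [hXf0, hYf1, hYf2]; exact hX0Y1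
    · norm_num [hXf0, hYf2]; exact hX0Y2
    · norm_num [hXf1, hYf1]; exact hX1'Y1
    · norm_num [hXf1, hYf2]; exact hX1'Y2
    · norm_num [hXf2, hYf1]; exact hSY1
    · norm_num [hXf2, hYf2]; exact hSY2
    · norm_num [hXf3, hYf1]; exact h3Y1
    · norm_num [hXf3, hYf2]; exact h3Y2
    · norm_num [hXf4, hYf1]; exact h4Y1
    · norm_num [hXf4, hYf2]; exact h4Y2
  · intro i j hi1 hi2 hj1 hj2
    interval_cases i <;> interval_cases j
    · norm_num [hYf1, hXf2]; exact hY1Y1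
    · norm_num [hYf1, hYf2, hXf3]; exact hY1Y2
    · norm_num [hYf1, hYf2, hXf3]; exact hY2Y1
    · norm_num [hYf2, hXf4]; exact hY2Y2
end
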